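/- If a generalized priority structure (q, ≿, t) is within-tier acyclic, then for every school choice problem with this priority structure, the set of Nash equilibrium outcomes of the tiered deferred acceptance mechanism equals the set of stable matchings with respect to the true preferences. -/

import Mathlib

set_option linter.unusedSectionVars false

namespace SchoolChoice

/-- A strict preference over `S ∪ {self}`, encoded by an injective ranking function on
`Option S`; `none` denotes being unmatched (the student himself), and a smaller rank
means more preferred. Injective rankings on a finite set are exactly strict linear orders. -/
structure Pref (S : Type) where
  rank : Option S → ℕ
  inj : Function.Injective rank

/-- Quotas together with strict priorities of the schools: `prank s` ranks the students
at school `s`, a smaller rank meaning higher priority. -/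
structure Prio (I S : Type) where
  quota : S → ℕ
  prank : S → I → ℕ
  inj : ∀ s, Function.Injective (prank s)

variable {I S : Type} [Fintype I] [Fintype S] [DecidableEq I] [DecidableEq S]

/-- `i` has strictly higher priority than `j` at school `s`. -/
def Prio.higher (E : Prio I S) (s : S) (i j : I) : Prop :=
  E.prank s i < E.prank s j

/-- A matching assigns to each student a school or himself (`none`). -/
abbrev Matching (I S : Type) := I → Option S

/-- The set of students assigned to school `s`. -/
def assigned (μ : Matching I S) (s : S) : Finset I :=
  Finset.univ.filter (fun i => μ i = some s)

/-- Quotas are respected. -/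
def Feasible (E : Prio I S) (μ : Matching I S) : Prop :=
  ∀ s, (assigned μ s).card ≤ E.quota s

/-- `(i, s)` is a blocking pair of `μ` with respect to preferences `R`:
`i` strictly prefers `s` to his assignment, and either `s` has an empty seat
(wastefulness) or some student assigned to `s` has lower priority than `i`
(justified envy). -/
def Blocks (E : Prio I S) (R : I → Pref S) (μ : Matching I S) (i : I) (s : S) : Prop :=
  (R i).rank (some s) < (R i).rank (μ i) ∧
    ((assigned μ s).card < E.quota s ∨ ∃ j, μ j = some s ∧ E.higher s i j)

/-- Individual rationality: every student weakly prefers his assignment to being unmatched. -/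
def IndivRat (R : I → Pref S) (μ : Matching I S) : Prop :=
  ∀ i, (R i).rank (μ i) ≤ (R i).rank none

/-- Non-wastefulness: no student prefers a school with an empty seat to his assignment. -/
def NonWasteful (E : Prio I S) (R : I → Pref S) (μ : Matching I S) : Prop :=
  ∀ i s, (R i).rank (some s) < (R i).rank (μ i) → E.quota s ≤ (assigned μ s).card

/-- Stability: feasible, individually rational, and no blocking pair
(no justified envy and non-wasteful). -/
def Stable (E : Prio I S) (R : I → Pref S) (μ : Matching I S) : Prop :=
  Feasible E μ ∧ IndivRat R μ ∧ ∀ i s, ¬ Blocks E R μ i s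

/-- The student-optimal stable matching for the (reported) preferences. -/
def StudentOptimal (E : Prio I S) (R : I → Pref S) (μ : Matching I S) : Prop :=
  Stable E R μ ∧ ∀ ν, Stable E R ν → ∀ i, (R i).rank (μ i) ≤ (R i).rank (ν i)

open Classical in
/-- The student-proposing deferred acceptance mechanism: by the Gale–Shapley theorem its
outcome is the (unique) student-optimal stable matching of the reported preferences. -/
noncomputable def DA (E : Prio I S) (R : I → Pref S) : Matching I S :=
  if h : ∃ μ, StudentOptimal E R μ then h.choose else fun _ => none

/-- A strict upper bound for the values of a ranking. -/
noncomputable def bnd (p : Pref S) : ℕ := (Finset.univ.sup p.rank) + 1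

lemma rank_lt_bnd (p : Pref S) (x : Option S) : p.rank x < bnd p :=
  Nat.lt_succ_of_le (Finset.le_sup (Finset.mem_univ x))

private lemma mul_add_lt {a K B r : ℕ} (ha : a ≤ K) (hr : r < B) :
    a * B + r < (K + 1) * B := by
  calc a * B + r < a * B + B := by omega
    _ = (a + 1) * B := by ring
    _ ≤ (K + 1) * B := Nat.mul_le_mul (by omega) le_rfl

/-- Is an alternative "inside the market" `A`?  `none` always is. -/
def goodB (A : S → Prop) [DecidablePred A] : Option S → Bool
  | none => true
  | some s => decide (A s)

/-- The preference truncated to the set of schools `A`: schools in `A` (and the outside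
option `none`) keep their relative order, while all schools outside `A` are pushed below
`none` (become unacceptable), keeping their relative order among themselves. -/
noncomputable def trunc (A : S → Prop) [DecidablePred A] (p : Pref S) : Pref S where
  rank x := (if goodB A x then 0 else bnd p) + p.rank x
  inj := by
    intro x y h
    by_cases hx : goodB A x <;> by_cases hy : goodB A y <;>
      simp only [hx, hy, if_true, if_false, Bool.false_eq_true, zero_add] at h
    · exact p.inj h
    · have := rank_lt_bnd p x; omega
    · have := rank_lt_bnd p y; omega
    · exact p.inj (by omega)

/-- The reshuffled preference with respect to a tier structure `t`: acceptable schools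
are grouped by tier in increasing tier order (keeping the original relative order within
each tier) above `none`, and all unacceptable schools are placed below `none`. -/
noncomputable def reshuffle (t : S → ℕ) (p : Pref S) : Pref S where
  rank x :=
    Option.elim x ((Finset.univ.sup t + 1) * bnd p)
      (fun s =>
        if p.rank (some s) < p.rank none then t s * bnd p + p.rank (some s)
        else (Finset.univ.sup t + 1) * bnd p + 1 + p.rank (some s))
  inj := by
    have hB : ∀ x, p.rank x < bnd p := rank_lt_bnd p
    have hK : ∀ s : S, t s ≤ Finset.univ.sup t := fun s => Finset.le_sup (Finset.mem_univ s)
    intro x y h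
    rcases x with _ | s <;> rcases y with _ | s' <;>
      simp only [Option.elim_none, Option.elim_some] at h
    · rfl
    · by_cases hy : p.rank (some s') < p.rank none <;> simp only [hy, if_true, if_false] at h
      · have := mul_add_lt (hK s') (hB (some s')); omega
      · omega
    · by_cases hx : p.rank (some s) < p.rank none <;> simp only [hx, if_true, if_false] at h
      · have := mul_add_lt (hK s) (hB (some s)); omega
      · omega
    · by_cases hx : p.rank (some s) < p.rank none <;>
        by_cases hy : p.rank (some s') < p.rank none <;>
        simp only [hx, hy, if_true, if_false] at h
      · have hts : t s = t s' := by
          rcases Nat.lt_trichotomy (t s) (t s') with h1 | h1 | h1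
          · have h2 : t s * bnd p + p.rank (some s) < t s' * bnd p + p.rank (some s') := by
              have h3 := mul_add_lt (a := t s) (K := t s' - 1) (B := bnd p) (by omega) (hB (some s))
              have h4 : (t s' - 1 + 1) * bnd p = t s' * bnd p := by congr 1; omega
              omega
            omega
          · exact h1
          · have h2 : t s' * bnd p + p.rank (some s') < t s * bnd p + p.rank (some s) := by
              have h3 := mul_add_lt (a := t s') (K := t s - 1) (B := bnd p) (by omega) (hB (some s'))
              have h4 : (t s - 1 + 1) * bnd p = t s * bnd p := by congr 1; omega
              omega
            omega
        rw [hts] at h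
        exact p.inj (by omega)
      · have := mul_add_lt (hK s) (hB (some s)); omega
      · have := mul_add_lt (hK s') (hB (some s')); omega
      · exact p.inj (by omega)

/-- A tier structure assigning each school a tier in `{1, …, T}`, each tier nonempty. -/
def IsTierStructure (t : S → ℕ) (T : ℕ) : Prop :=
  (∀ s, 1 ≤ t s ∧ t s ≤ T) ∧ ∀ k, 1 ≤ k → k ≤ T → ∃ s, t s = k

/-- Rounds `1, …, k` of the tiered deferred acceptance mechanism: in round `k` the
students left unmatched so far participate in the DA mechanism with their preferences
truncated to the tier-`k` schools (already matched students participate with nothing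
acceptable); students matched in earlier rounds keep their assignments. -/
noncomputable def TDAaux (E : Prio I S) (t : S → ℕ) (Q : I → Pref S) : ℕ → Matching I S
  | 0 => fun _ => none
  | k + 1 => fun i =>
      match TDAaux E t Q k i with
      | some s => some s
      | none =>
          DA E (fun j =>
            if TDAaux E t Q k j = none then trunc (fun s => t s = k + 1) (Q j)
            else trunc (fun _ => False) (Q j)) i

/-- The tiered deferred acceptance mechanism under tier structure `t`. -/
noncomputable def TDA (E : Prio I S) (t : S → ℕ) (Q : I → Pref S) : Matching I S :=
  TDAaux E t Q (Finset.univ.sup t)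

/-- `Q` is a (pure) Nash equilibrium of the preference revelation game induced by the
mechanism `f` when the true preferences are `R`: no student can obtain a school he truly
strictly prefers by unilaterally changing his report. -/
def NashEq (R : I → Pref S) (f : (I → Pref S) → Matching I S) (Q : I → Pref S) : Prop :=
  ∀ (i : I) (Qi' : Pref S),
    (R i).rank (f Q i) ≤ (R i).rank (f (Function.update Q i Qi') i)

/-- `μ` is a Nash equilibrium outcome of the revelation game induced by `f` at true
preferences `R`. -/
def NashOutcome (R : I → Pref S) (f : (I → Pref S) → Matching I S) (μ : Matching I S) : Prop :=
  ∃ Q, NashEq R f Q ∧ f Q = μ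

/-- The preference `p` is aligned with the tier structure `t`: a (weakly) more preferred
school always lies in a weakly earlier tier. -/
def AlignedPref (t : S → ℕ) (p : Pref S) : Prop :=
  ∀ s s' : S, p.rank (some s) ≤ p.rank (some s') → t s ≤ t s'

/-- `p` lists exactly the school in `o` (if any) as acceptable. -/
def OnlyAcceptable (p : Pref S) (o : Option S) : Prop :=
  ∀ s : S, (p.rank (some s) < p.rank none ↔ o = some s)

/-- An Ergin cycle of the priority structure among the schools in `A`. -/
def Cycle (E : Prio I S) (A : S → Prop) : Prop :=
  ∃ a b : S, A a ∧ A b ∧ a ≠ b ∧ ∃ i j k : I,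
    E.higher a i j ∧ E.higher a j k ∧ E.higher b k i ∧
    ∃ Ia Ib : Finset I, Disjoint Ia Ib ∧
      (∀ l ∈ Ia, l ≠ i ∧ l ≠ j ∧ l ≠ k ∧ E.higher a l j) ∧
      (∀ l ∈ Ib, l ≠ i ∧ l ≠ j ∧ l ≠ k ∧ E.higher b l i) ∧
      Ia.card = E.quota a - 1 ∧ Ib.card = E.quota b - 1

/-- Within-tier acyclicity of a generalized priority structure: no Ergin cycle among the
schools of any single tier. -/
def WithinTierAcyclic (E : Prio I S) (t : S → ℕ) : Prop :=
  ∀ k : ℕ, ¬ Cycle E (fun s => t s = k)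

/-- The (strict) preference `pr` of school `s` over sets of students is a responsive
extension of its priorities. -/
def Responsive (E : Prio I S) (s : S) (pr : Finset I → Finset I → Prop) : Prop :=
  ∀ (J : Finset I) (i j : I), i ∉ J → j ∉ J → E.higher s i j →
    pr (insert i J) (insert j J)

/-- `t` is a refinement of `t'`: `t'` ranks `a` in a strictly later tier than `b` only
if `t` does. -/
def Refines (t t' : S → ℕ) : Prop :=
  ∀ a b : S, t' b < t' a → t b < t a


/-! ### Auxiliary machinery for the proof of Statement 6 -/

section Machinery

variable {I S : Type} [Fintype I] [Fintype S] [DecidableEq I] [DecidableEq S]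

lemma rank_ne {p : Pref S} {x y : Option S} (h : x ≠ y) : p.rank x ≠ p.rank y :=
  fun he => h (p.inj he)

lemma rank_lt_of_le_ne {p : Pref S} {x y : Option S} (h : p.rank x ≤ p.rank y)
    (hne : x ≠ y) : p.rank x < p.rank y :=
  lt_of_le_of_ne h (rank_ne hne)

lemma mem_assigned {μ : Matching I S} {c : S} {x : I} :
    x ∈ assigned μ c ↔ μ x = some c := by
  simp [assigned]

/-- An injective embedding of the (finite) school set into `ℕ`. -/
noncomputable def embS : S → ℕ := fun s => ((Fintype.equivFin S) s : ℕ)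

lemma embS_inj : Function.Injective (embS (S := S)) := by
  intro a b h
  have := (Fintype.equivFin S).injective (Fin.ext h)
  exact this

/-- The preference that finds exactly the school in `o` (if any) acceptable,
with `o` the unique top choice. -/
noncomputable def onlyPref (o : Option S) : Pref S where
  rank := fun x => if x = o then 0 else Option.elim x 1 (fun s => 2 + embS s)
  inj := by
    intro x y h
    dsimp only at h
    by_cases hx : x = o <;> by_cases hy : y = o
    · rw [hx, hy]
    · exfalso; rw [if_pos hx, if_neg hy] at h
      cases y with
      | none => simp at h
      | some s => simp only [Option.elim_some] at h; omega
    · exfalso; rw [if_neg hx, if_pos hy] at h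
      cases x with
      | none => simp at h
      | some s => simp only [Option.elim_some] at h; omega
    · rw [if_neg hx, if_neg hy] at h
      cases x with
      | none =>
        cases y with
        | none => rfl
        | some s => simp only [Option.elim_none, Option.elim_some] at h; omega
      | some s =>
        cases y with
        | none => simp only [Option.elim_none, Option.elim_some] at h; omega
        | some s' =>
          simp only [Option.elim_some] at h
          have : embS s = embS s' := by omega
          rw [embS_inj this]

@[simp] lemma onlyPref_rank_self (o : Option S) : (onlyPref o).rank o = 0 := by
  simp [onlyPref]

lemma onlyPref_rank_pos {o x : Option S} (h : x ≠ o) : 0 < (onlyPref o).rank x := by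
  simp only [onlyPref, if_neg h]
  cases x <;> simp

lemma onlyPref_none_lt_some {o : Option S} {s : S} (h : some s ≠ o) :
    (onlyPref o).rank none < (onlyPref o).rank (some s) := by
  simp only [onlyPref, if_neg h, Option.elim_some]
  by_cases ho : (none : Option S) = o
  · rw [if_pos ho]; omega
  · rw [if_neg ho]; simp; omega

lemma onlyPref_acc_iff {o : Option S} {s : S} :
    (onlyPref o).rank (some s) < (onlyPref o).rank none ↔ o = some s := by
  constructor
  · intro h
    by_contra hne
    have := onlyPref_none_lt_some (o := o) (s := s) (fun he => hne he.symm)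
    omega
  · intro h
    subst h
    simp only [onlyPref_rank_self]
    exact onlyPref_rank_pos (by simp)

/-- `onlyPref` satisfies the given `OnlyAcceptable` specification. -/
lemma onlyPref_onlyAcceptable (o : Option S) : OnlyAcceptable (onlyPref o) o := by
  intro s; exact onlyPref_acc_iff

section TruncLemmas

variable (A : S → Prop) [DecidablePred A] (p : Pref S)

lemma trunc_rank_none : (trunc A p).rank none = p.rank none := by
  simp [trunc, goodB]

lemma trunc_rank_some_mem {s : S} (h : A s) :
    (trunc A p).rank (some s) = p.rank (some s) := by
  simp [trunc, goodB, h]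

lemma trunc_rank_some_not {s : S} (h : ¬ A s) :
    (trunc A p).rank (some s) = bnd p + p.rank (some s) := by
  simp [trunc, goodB, h]

lemma trunc_acc_iff {s : S} :
    (trunc A p).rank (some s) < (trunc A p).rank none ↔
      (A s ∧ p.rank (some s) < p.rank none) := by
  rw [trunc_rank_none]
  by_cases h : A s
  · rw [trunc_rank_some_mem _ _ h]; simp [h]
  · rw [trunc_rank_some_not _ _ h]
    have := rank_lt_bnd p none
    simp [h]; omega

end TruncLemmas

end Machinery
section DAcore

variable {I S : Type} [Fintype I] [Fintype S] [DecidableEq I] [DecidableEq S]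

/-- The options still available to a student, given the schools that rejected him. -/
noncomputable def allowedOpts (rejs : Finset S) : Finset (Option S) :=
  insert none ((Finset.univ.filter (fun s : S => s ∉ rejs)).image some)

lemma none_mem_allowedOpts (rejs : Finset S) : (none : Option S) ∈ allowedOpts rejs :=
  Finset.mem_insert_self _ _

lemma some_mem_allowedOpts {rejs : Finset S} {c : S} :
    some c ∈ allowedOpts rejs ↔ c ∉ rejs := by
  simp [allowedOpts]

lemma exists_propose (p : Pref S) (rejs : Finset S) :
    ∃ o, o ∈ allowedOpts rejs ∧ ∀ o' ∈ allowedOpts rejs, p.rank o ≤ p.rank o' := by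
  obtain ⟨o, ho, h⟩ := Finset.exists_min_image (allowedOpts rejs) p.rank
    ⟨none, none_mem_allowedOpts rejs⟩
  exact ⟨o, ho, h⟩

/-- The most preferred option among the ones not yet rejected. -/
noncomputable def propose (p : Pref S) (rejs : Finset S) : Option S :=
  (exists_propose p rejs).choose

lemma propose_mem (p : Pref S) (rejs : Finset S) : propose p rejs ∈ allowedOpts rejs :=
  (exists_propose p rejs).choose_spec.1

lemma propose_min (p : Pref S) (rejs : Finset S) :
    ∀ o ∈ allowedOpts rejs, p.rank (propose p rejs) ≤ p.rank o :=
  (exists_propose p rejs).choose_spec.2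

lemma propose_le_none (p : Pref S) (rejs : Finset S) :
    p.rank (propose p rejs) ≤ p.rank none :=
  propose_min p rejs none (none_mem_allowedOpts rejs)

lemma propose_not_rejected {p : Pref S} {rejs : Finset S} {c : S}
    (h : propose p rejs = some c) : c ∉ rejs := by
  have := propose_mem p rejs
  rw [h] at this
  exact some_mem_allowedOpts.1 this

lemma propose_acc {p : Pref S} {rejs : Finset S} {c : S}
    (h : propose p rejs = some c) : p.rank (some c) < p.rank none := by
  have h1 := propose_le_none p rejs
  rw [h] at h1
  exact rank_lt_of_le_ne h1 (by simp)

lemma propose_of_nothing_acc {p : Pref S} (h : ∀ c : S, p.rank none < p.rank (some c))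
    (rejs : Finset S) : propose p rejs = none := by
  cases hp : propose p rejs with
  | none => rfl
  | some c => exact absurd (propose_acc hp) (by have := h c; omega)

lemma propose_of_top {p : Pref S} {c : S} {rejs : Finset S} (hc : c ∉ rejs)
    (h : ∀ o, o ≠ some c → p.rank (some c) < p.rank o) : propose p rejs = some c := by
  by_contra hne
  have h1 := propose_min p rejs (some c) (some_mem_allowedOpts.2 hc)
  have h2 := h (propose p rejs) hne
  omega

/-- A state of the (sequential) deferred acceptance algorithm. -/
structure DAState (I S : Type) where
  hold : I → Option S
  rej  : I → Finset S

/-- The initial state. -/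
def initState : DAState I S := ⟨fun _ => none, fun _ => ∅⟩

/-- One legal step of sequential deferred acceptance, with actors restricted to `D`:
an unmatched student `x ∈ D` proposes to his best not-yet-rejecting school `c`;
the school accepts if it has room, refuses if it is full and `x` is worse than
everyone held, and otherwise displaces the worst held student. -/
inductive StepOn (E : Prio I S) (P : I → Pref S) (D : I → Prop) :
    DAState I S → DAState I S → Prop
  | accept (st : DAState I S) (x : I) (c : S) (hD : D x)
      (hx : st.hold x = none) (hp : propose (P x) (st.rej x) = some c)
      (hroom : (assigned st.hold c).card < E.quota c) :
      StepOn E P D st ⟨Function.update st.hold x (some c), st.rej⟩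
  | refuse (st : DAState I S) (x : I) (c : S) (hD : D x)
      (hx : st.hold x = none) (hp : propose (P x) (st.rej x) = some c)
      (hfull : E.quota c ≤ (assigned st.hold c).card)
      (hworst : ∀ y ∈ assigned st.hold c, E.higher c y x) :
      StepOn E P D st ⟨st.hold, Function.update st.rej x (insert c (st.rej x))⟩
  | displace (st : DAState I S) (x w : I) (c : S) (hD : D x)
      (hx : st.hold x = none) (hp : propose (P x) (st.rej x) = some c)
      (hfull : E.quota c ≤ (assigned st.hold c).card)
      (hw : st.hold w = some c)
      (hwmax : ∀ y ∈ assigned st.hold c, y ≠ w → E.higher c y w)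
      (hxw : E.higher c x w) :
      StepOn E P D st ⟨Function.update (Function.update st.hold w none) x (some c),
                       Function.update st.rej w (insert c (st.rej w))⟩

lemma assigned_update_some (h : Matching I S) {x : I} (hx : h x = none) (c d : S) :
    assigned (Function.update h x (some c)) d =
      if d = c then insert x (assigned h d) else assigned h d := by
  ext y
  by_cases hy : y = x
  · subst hy
    by_cases hdc : d = c
    · simp [mem_assigned, Function.update_self, hdc, hx, Finset.mem_insert]
    · simp [mem_assigned, Function.update_self, hdc, hx, Finset.mem_insert]
      exact fun he => hdc he.symm
  · by_cases hdc : d = c <;>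
      simp [mem_assigned, Function.update_of_ne hy, hdc, Finset.mem_insert, hy]

lemma assigned_update_none (h : Matching I S) (x : I) (d : S) :
    assigned (Function.update h x none) d = (assigned h d).erase x := by
  ext y
  by_cases hy : y = x
  · subst hy; simp [mem_assigned, Function.update_self]
  · simp [mem_assigned, Function.update_of_ne hy, hy]

/-- The basic invariants of the deferred acceptance states. -/
structure Inv (E : Prio I S) (P : I → Pref S) (st : DAState I S) : Prop where
  g1 : ∀ x c, st.hold x = some c → propose (P x) (st.rej x) = some c
  g2 : ∀ c, (assigned st.hold c).card ≤ E.quota c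
  g4 : ∀ x c, c ∈ st.rej x → (assigned st.hold c).card = E.quota c ∧
        ∀ y ∈ assigned st.hold c, E.higher c y x

lemma initInv (E : Prio I S) (P : I → Pref S) : Inv E P (initState (I := I) (S := S)) := by
  refine ⟨?_, ?_, ?_⟩
  · intro x c h; simp [initState] at h
  · intro c
    have : assigned (initState (I := I) (S := S)).hold c = ∅ := by
      ext y; simp [mem_assigned, initState]
    rw [this]; simp
  · intro x c h; simp [initState] at h

end DAcore
section DAinv

variable {I S : Type} [Fintype I] [Fintype S] [DecidableEq I] [DecidableEq S]
variable {E : Prio I S} {P P' : I → Pref S} {D : I → Prop} {st st' : DAState I S}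

lemma assigned_displace (h : Matching I S) {x w : I} {c : S}
    (hx : h x = none) (hw : h w = some c) (d : S) :
    assigned (Function.update (Function.update h w none) x (some c)) d =
      if d = c then insert x ((assigned h c).erase w) else assigned h d := by
  have hxw : x ≠ w := fun he => by rw [he, hw] at hx; cases hx
  rw [assigned_update_some (Function.update h w none)
    (by rw [Function.update_of_ne hxw]; exact hx) c d]
  rw [assigned_update_none]
  by_cases hdc : d = c
  · subst hdc; rw [if_pos rfl, if_pos rfl]
  · rw [if_neg hdc, if_neg hdc]
    apply Finset.erase_eq_of_notMem
    rw [mem_assigned, hw]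
    exact fun he => hdc (by injection he with h'; exact h'.symm)

lemma higher_trans {E : Prio I S} {c : S} {a b d : I} (h1 : E.higher c a b)
    (h2 : E.higher c b d) : E.higher c a d := lt_trans h1 h2

lemma higher_ne {E : Prio I S} {c : S} {a b : I} (h : E.higher c a b) : a ≠ b :=
  fun he => by subst he; exact lt_irrefl _ h

lemma higher_total {E : Prio I S} {c : S} {a b : I} (hne : a ≠ b) :
    E.higher c a b ∨ E.higher c b a := by
  rcases Nat.lt_trichotomy (E.prank c a) (E.prank c b) with h | h | h
  · exact Or.inl h
  · exact absurd (E.inj c h) hne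
  · exact Or.inr h

lemma displace_card {h : Matching I S} {x w : I} {c : S}
    (hx : h x = none) (hw : h w = some c) :
    (insert x ((assigned h c).erase w)).card = (assigned h c).card := by
  have hxmem : x ∉ assigned h c := by rw [mem_assigned, hx]; simp
  have hwmem : w ∈ assigned h c := mem_assigned.2 hw
  rw [Finset.card_insert_of_notMem (fun hm => hxmem (Finset.mem_of_mem_erase hm)),
    Finset.card_erase_of_mem hwmem]
  have : 1 ≤ (assigned h c).card := Finset.card_pos.2 ⟨w, hwmem⟩
  omega

lemma Inv.step (hinv : Inv E P st) (hs : StepOn E P D st st') : Inv E P st' := by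
  cases hs with
  | accept x c hD hx hp hroom =>
    refine ⟨?_, ?_, ?_⟩
    · intro y d hy
      dsimp only at hy ⊢
      by_cases hyx : y = x
      · subst hyx
        rw [Function.update_self] at hy
        injection hy with hy; subst hy; exact hp
      · rw [Function.update_of_ne hyx] at hy; exact hinv.g1 y d hy
    · intro d
      dsimp only
      rw [assigned_update_some st.hold hx c d]
      rcases eq_or_ne d c with rfl | hdc
      · rw [if_pos rfl]
        calc (insert x (assigned st.hold d)).card ≤ (assigned st.hold d).card + 1 :=
              Finset.card_insert_le _ _
          _ ≤ E.quota d := hroom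
      · rw [if_neg hdc]; exact hinv.g2 d
    · intro y d hd
      dsimp only at hd ⊢
      have h4 := hinv.g4 y d hd
      rw [assigned_update_some st.hold hx c d]
      rcases eq_or_ne d c with rfl | hdc
      · exact absurd h4.1 (Nat.ne_of_lt hroom)
      · rw [if_neg hdc]; exact h4
  | refuse x c hD hx hp hfull hworst =>
    refine ⟨?_, ?_, ?_⟩
    · intro y d hy
      dsimp only at hy ⊢
      by_cases hyx : y = x
      · subst hyx; rw [hx] at hy; cases hy
      · rw [Function.update_of_ne hyx]; exact hinv.g1 y d hy
    · exact hinv.g2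
    · intro y d hd
      dsimp only at hd ⊢
      by_cases hyx : y = x
      · subst hyx
        rw [Function.update_self, Finset.mem_insert] at hd
        rcases hd with hd | hd
        · subst hd
          exact ⟨le_antisymm (hinv.g2 _) hfull, hworst⟩
        · exact hinv.g4 _ _ hd
      · rw [Function.update_of_ne hyx] at hd; exact hinv.g4 _ _ hd
  | displace x w c hD hx hp hfull hw hwmax hxw =>
    have hwmem : w ∈ assigned st.hold c := mem_assigned.2 hw
    have hcard := displace_card (h := st.hold) (x := x) (w := w) (c := c) hx hw
    refine ⟨?_, ?_, ?_⟩
    · intro y d hy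
      dsimp only at hy ⊢
      by_cases hyx : y = x
      · subst hyx
        rw [Function.update_self] at hy
        injection hy with hy; subst hy
        rw [Function.update_of_ne (fun he => by rw [he, hw] at hx; cases hx)]
        exact hp
      · rw [Function.update_of_ne hyx] at hy
        by_cases hyw : y = w
        · subst hyw; rw [Function.update_self] at hy; cases hy
        · rw [Function.update_of_ne hyw] at hy
          rw [Function.update_of_ne hyw]
          exact hinv.g1 y d hy
    · intro d
      dsimp only
      rw [assigned_displace st.hold hx hw d]
      rcases eq_or_ne d c with rfl | hdc
      · rw [if_pos rfl, hcard]; exact hinv.g2 _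
      · rw [if_neg hdc]; exact hinv.g2 d
    · intro y d hd
      dsimp only at hd ⊢
      rw [assigned_displace st.hold hx hw d]
      by_cases hyw : y = w
      · subst hyw
        rw [Function.update_self, Finset.mem_insert] at hd
        rcases hd with rfl | hd
        · rw [if_pos rfl, hcard]
          refine ⟨le_antisymm (hinv.g2 _) hfull, ?_⟩
          intro z hz
          rcases Finset.mem_insert.1 hz with hz | hz
          · subst hz; exact hxw
          · exact hwmax z (Finset.mem_of_mem_erase hz) (Finset.ne_of_mem_erase hz)
        · have h4 := hinv.g4 _ _ hd
          rcases eq_or_ne d c with rfl | hdc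
          · rw [if_pos rfl, hcard]
            refine ⟨h4.1, ?_⟩
            intro z hz
            rcases Finset.mem_insert.1 hz with hz | hz
            · subst hz
              exact higher_trans hxw (h4.2 _ hwmem)
            · exact h4.2 z (Finset.mem_of_mem_erase hz)
          · rw [if_neg hdc]; exact h4
      · rw [Function.update_of_ne hyw] at hd
        have h4 := hinv.g4 _ _ hd
        rcases eq_or_ne d c with rfl | hdc
        · rw [if_pos rfl, hcard]
          refine ⟨h4.1, ?_⟩
          intro z hz
          rcases Finset.mem_insert.1 hz with hz | hz
          · subst hz
            exact higher_trans hxw (h4.2 _ hwmem)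
          · exact h4.2 z (Finset.mem_of_mem_erase hz)
        · rw [if_neg hdc]; exact h4

/-- Once a school is full of students all with higher priority than `x`,
this remains true forever (along any steps, for any profile). -/
lemma fullAbove_step (hs : StepOn E P D st st') (c : S) (x : I)
    (hcard : E.quota c ≤ (assigned st.hold c).card)
    (habove : ∀ y ∈ assigned st.hold c, E.higher c y x) :
    E.quota c ≤ (assigned st'.hold c).card ∧
      ∀ y ∈ assigned st'.hold c, E.higher c y x := by
  cases hs with
  | accept z d hD hz hp hroom =>
    dsimp only
    rw [assigned_update_some st.hold hz d c]
    rcases eq_or_ne c d with rfl | hcd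
    · exact absurd hroom (by omega)
    · rw [if_neg hcd]; exact ⟨hcard, habove⟩
  | refuse z d hD hz hp hfull hworst => exact ⟨hcard, habove⟩
  | displace z w d hD hz hp hfull hw hwmax hzw =>
    dsimp only
    rw [assigned_displace st.hold hz hw c]
    rcases eq_or_ne c d with rfl | hcd
    · rw [if_pos rfl, displace_card hz hw]
      refine ⟨hcard, ?_⟩
      intro y hy
      rcases Finset.mem_insert.1 hy with hy | hy
      · subst hy
        exact higher_trans hzw (habove w (mem_assigned.2 hw))
      · exact habove y (Finset.mem_of_mem_erase hy)
    · rw [if_neg hcd]; exact ⟨hcard, habove⟩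

lemma fullAbove_reach (hr : Relation.ReflTransGen (StepOn E P D) st st') (c : S) (x : I)
    (hcard : E.quota c ≤ (assigned st.hold c).card)
    (habove : ∀ y ∈ assigned st.hold c, E.higher c y x) :
    E.quota c ≤ (assigned st'.hold c).card ∧
      ∀ y ∈ assigned st'.hold c, E.higher c y x := by
  induction hr with
  | refl => exact ⟨hcard, habove⟩
  | tail h₁ h₂ ih => exact fullAbove_step h₂ c x ih.1 ih.2

end DAinv
section DAterm

variable {I S : Type} [Fintype I] [Fintype S] [DecidableEq I] [DecidableEq S]
variable {E : Prio I S} {P P' : I → Pref S} {D : I → Prop} {st st' : DAState I S}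

/-- Key auxiliary lemma: a school cannot reject a student who is assigned to it by a
stable matching of a compatible profile. -/
lemma no_reject_block {ν : Matching I S} (hν : Stable E P ν)
    (hagree : ∀ l, P l = P' l ∨ ∀ c : S, (P' l).rank none < (P' l).rank (some c))
    (st : DAState I S)
    (H : ∀ j c, P j = P' j → ν j = some c → c ∉ st.rej j)
    (c : S) (y : I) (W : Finset I)
    (hWcard : E.quota c ≤ W.card)
    (hWprop : ∀ m ∈ W, propose (P' m) (st.rej m) = some c)
    (hWy : ∀ m ∈ W, E.higher c m y) (hyW : y ∉ W) :
    ¬ (P y = P' y ∧ ν y = some c) := by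
  rintro ⟨hPy, hνy⟩
  have hall : ∀ m ∈ W, ν m = some c := by
    intro m hm
    have hPm : P m = P' m := by
      rcases hagree m with h | h
      · exact h
      · exact absurd (propose_acc (hWprop m hm)) (by have := h c; omega)
    have hle : (P' m).rank (some c) ≤ (P' m).rank (ν m) := by
      have hmin := propose_min (P' m) (st.rej m)
      rw [hWprop m hm] at hmin
      cases hνm : ν m with
      | none => exact hmin none (none_mem_allowedOpts _)
      | some d =>
        exact hmin (some d) (some_mem_allowedOpts.2 (H m d hPm (by rw [hνm])))
    by_contra hne
    have hlt : (P m).rank (some c) < (P m).rank (ν m) := by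
      rw [hPm]
      exact rank_lt_of_le_ne hle (fun he => hne he.symm)
    exact hν.2.2 m c ⟨hlt, Or.inr ⟨y, hνy, hWy m hm⟩⟩
  have hsub : insert y W ⊆ assigned ν c := by
    intro z hz
    rcases Finset.mem_insert.1 hz with rfl | hz
    · exact mem_assigned.2 hνy
    · exact mem_assigned.2 (hall z hz)
  have hcard := Finset.card_le_card hsub
  rw [Finset.card_insert_of_notMem hyW] at hcard
  have := hν.1 c
  omega

lemma rejInv_step {ν : Matching I S} (hν : Stable E P ν)
    (hagree : ∀ l, P l = P' l ∨ ∀ c : S, (P' l).rank none < (P' l).rank (some c))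
    (hinv : Inv E P' st) (hs : StepOn E P' D st st')
    (H : ∀ j c, P j = P' j → ν j = some c → c ∉ st.rej j) :
    ∀ j c, P j = P' j → ν j = some c → c ∉ st'.rej j := by
  cases hs with
  | accept x c hD hx hp hroom => exact H
  | refuse x c hD hx hp hfull hworst =>
    intro j d hPj hνj
    dsimp only
    by_cases hjx : j = x
    · subst hjx
      rw [Function.update_self, Finset.mem_insert]
      rintro (rfl | hd)
      · exact no_reject_block hν hagree st H d j (assigned st.hold d) hfull
          (fun m hm => hinv.g1 m d (mem_assigned.1 hm)) hworst
          (by rw [mem_assigned, hx]; simp) ⟨hPj, hνj⟩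
      · exact H j d hPj hνj hd
    · rw [Function.update_of_ne hjx]
      exact H j d hPj hνj
  | displace x w c hD hx hp hfull hw hwmax hxw =>
    intro j d hPj hνj
    dsimp only
    by_cases hjw : j = w
    · subst hjw
      rw [Function.update_self, Finset.mem_insert]
      rintro (rfl | hd)
      · refine no_reject_block hν hagree st H d j
          (insert x ((assigned st.hold d).erase j)) ?_ ?_ ?_ ?_ ⟨hPj, hνj⟩
        · rw [displace_card hx hw]; exact hfull
        · intro m hm
          rcases Finset.mem_insert.1 hm with rfl | hm
          · exact hp
          · exact hinv.g1 m d (mem_assigned.1 (Finset.mem_of_mem_erase hm))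
        · intro m hm
          rcases Finset.mem_insert.1 hm with rfl | hm
          · exact hxw
          · exact hwmax m (Finset.mem_of_mem_erase hm) (Finset.ne_of_mem_erase hm)
        · intro hm
          rcases Finset.mem_insert.1 hm with he | hm
          · rw [← he, hw] at hx
            cases hx
          · exact (Finset.notMem_erase _ _) hm
      · exact H j d hPj hνj hd
    · rw [Function.update_of_ne hjw]
      exact H j d hPj hνj

lemma Inv.reach (hinv : Inv E P st) (hr : Relation.ReflTransGen (StepOn E P D) st st') :
    Inv E P st' := by
  induction hr with
  | refl => exact hinv
  | tail h₁ h₂ ih => exact ih.step h₂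

lemma rejInv_reach {ν : Matching I S} (hν : Stable E P ν)
    (hagree : ∀ l, P l = P' l ∨ ∀ c : S, (P' l).rank none < (P' l).rank (some c))
    (hinv : Inv E P' st) (hr : Relation.ReflTransGen (StepOn E P' D) st st')
    (H : ∀ j c, P j = P' j → ν j = some c → c ∉ st.rej j) :
    ∀ j c, P j = P' j → ν j = some c → c ∉ st'.rej j := by
  induction hr with
  | refl => exact H
  | tail h₁ h₂ ih =>
    exact rejInv_step hν hagree (hinv.reach h₁) h₂ ih

/-- Terminality for the actors in `D`. -/
def TerminalOn (P : I → Pref S) (D : I → Prop) (st : DAState I S) : Prop :=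
  ∀ x, D x → st.hold x = none → propose (P x) (st.rej x) = none

lemma stable_of_terminal (hinv : Inv E P st)
    (hterm : TerminalOn P (fun _ => True) st) : Stable E P st.hold := by
  refine ⟨hinv.g2, ?_, ?_⟩
  · intro x
    cases hx : st.hold x with
    | none => exact le_rfl
    | some c =>
      have := hinv.g1 x c hx
      have h2 := propose_le_none (P x) (st.rej x)
      rw [this] at h2
      exact h2
  · rintro x c ⟨hpref, hdisj⟩
    have hrej : c ∈ st.rej x := by
      by_contra hc
      have hmem : some c ∈ allowedOpts (st.rej x) := some_mem_allowedOpts.2 hc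
      cases hx : st.hold x with
      | none =>
        have := propose_min (P x) (st.rej x) (some c) hmem
        rw [hterm x trivial hx] at this
        rw [hx] at hpref
        omega
      | some d =>
        have := propose_min (P x) (st.rej x) (some c) hmem
        rw [hinv.g1 x d hx] at this
        rw [hx] at hpref
        omega
    have h4 := hinv.g4 x c hrej
    rcases hdisj with h | ⟨j, hj, hij⟩
    · omega
    · have := h4.2 j (mem_assigned.2 hj)
      exact absurd hij (by simp only [Prio.higher] at this ⊢; omega)

lemma optimal_of_reach_terminal
    (hr : Relation.ReflTransGen (StepOn E P (fun _ => True))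
      (initState (I := I) (S := S)) st)
    (hterm : TerminalOn P (fun _ => True) st) :
    StudentOptimal E P st.hold := by
  have hinv : Inv E P st := (initInv E P).reach hr
  refine ⟨stable_of_terminal hinv hterm, ?_⟩
  intro ν hν j
  have H0 : ∀ j c, P j = P j → ν j = some c → c ∉ (initState (I := I) (S := S)).rej j := by
    intro j c _ _
    simp [initState]
  have H := rejInv_reach (P := P) (P' := P) hν (fun l => Or.inl rfl) (initInv E P) hr H0
  have hνmem : ν j ∈ allowedOpts (st.rej j) := by
    cases hνj : ν j with
    | none => exact none_mem_allowedOpts _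
    | some d => exact some_mem_allowedOpts.2 (H j d rfl hνj)
  have hmin := propose_min (P j) (st.rej j) (ν j) hνmem
  cases hj : st.hold j with
  | none =>
    rw [hterm j trivial hj] at hmin
    exact hmin
  | some d =>
    rw [hinv.g1 j d hj] at hmin
    exact hmin

end DAterm
section DArun

variable {I S : Type} [Fintype I] [Fintype S] [DecidableEq I] [DecidableEq S]
variable {E : Prio I S} {P : I → Pref S} {D : I → Prop} {st st' : DAState I S}

/-- A decreasing measure for the deferred acceptance algorithm. -/
noncomputable def meas (st : DAState I S) : ℕ :=
  (∑ x : I, (Fintype.card S - (st.rej x).card)) * (Fintype.card I + 1) +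
    (Finset.univ.filter (fun x : I => st.hold x = none)).card

lemma rej_card_le (st : DAState I S) (x : I) : (st.rej x).card ≤ Fintype.card S := by
  rw [← Finset.card_univ]
  exact Finset.card_le_card (Finset.subset_univ _)

lemma sum_rej_update (st : DAState I S) (x : I) (A : Finset S)
    (h : Fintype.card S - A.card + 1 = Fintype.card S - (st.rej x).card) :
    (∑ y : I, (Fintype.card S - (Function.update st.rej x A y).card)) + 1 =
      ∑ y : I, (Fintype.card S - (st.rej y).card) := by
  rw [← Finset.sum_erase_add _ _ (Finset.mem_univ x),
      ← Finset.sum_erase_add _ (fun y => Fintype.card S - (st.rej y).card) (Finset.mem_univ x)]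
  have hcong : ∑ y ∈ Finset.univ.erase x, (Fintype.card S - (Function.update st.rej x A y).card)
      = ∑ y ∈ Finset.univ.erase x, (Fintype.card S - (st.rej y).card) := by
    apply Finset.sum_congr rfl
    intro y hy
    rw [Function.update_of_ne (Finset.ne_of_mem_erase hy)]
  rw [hcong, Function.update_self]
  omega

lemma meas_step (hinv : Inv E P st) (hs : StepOn E P D st st') : meas st' < meas st := by
  have hIbound : ∀ t : DAState I S,
      (Finset.univ.filter (fun x : I => t.hold x = none)).card ≤ Fintype.card I := by
    intro t
    rw [← Finset.card_univ]
    exact Finset.card_le_card (Finset.filter_subset _ _)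
  cases hs with
  | accept x c hD hx hp hroom =>
    have hsum : (∑ y : I, (Fintype.card S - ((⟨Function.update st.hold x (some c),
        st.rej⟩ : DAState I S).rej y).card)) =
        ∑ y : I, (Fintype.card S - (st.rej y).card) := rfl
    have hfilt : (Finset.univ.filter
        (fun y : I => Function.update st.hold x (some c) y = none)) =
        (Finset.univ.filter (fun y : I => st.hold y = none)).erase x := by
      ext y
      by_cases hyx : y = x
      · subst hyx; simp [Function.update_self]
      · simp [Function.update_of_ne hyx, hyx]
    have hxmem : x ∈ Finset.univ.filter (fun y : I => st.hold y = none) := by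
      simp [hx]
    have : ((Finset.univ.filter (fun y : I => st.hold y = none)).erase x).card <
        (Finset.univ.filter (fun y : I => st.hold y = none)).card := by
      rw [Finset.card_erase_of_mem hxmem]
      have : 1 ≤ (Finset.univ.filter (fun y : I => st.hold y = none)).card :=
        Finset.card_pos.2 ⟨x, hxmem⟩
      omega
    simp only [meas, hsum, hfilt]
    omega
  | refuse x c hD hx hp hfull hworst =>
    have hc : c ∉ st.rej x := propose_not_rejected hp
    have hterm : (Fintype.card S - (insert c (st.rej x)).card) + 1 =
        Fintype.card S - (st.rej x).card := by
      rw [Finset.card_insert_of_notMem hc]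
      have h1 : (insert c (st.rej x)).card ≤ Fintype.card S := by
        rw [← Finset.card_univ]
        exact Finset.card_le_card (Finset.subset_univ _)
      rw [Finset.card_insert_of_notMem hc] at h1
      omega
    have hsum := sum_rej_update st x (insert c (st.rej x)) hterm
    have hmul : (∑ y : I, (Fintype.card S - (Function.update st.rej x
        (insert c (st.rej x)) y).card)) * (Fintype.card I + 1) + (Fintype.card I + 1) =
        (∑ y : I, (Fintype.card S - (st.rej y).card)) * (Fintype.card I + 1) := by
      rw [← hsum]; ring
    have hub := hIbound (⟨st.hold, Function.update st.rej x
        (insert c (st.rej x))⟩ : DAState I S)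
    simp only [meas] at *
    omega
  | displace x w c hD hx hp hfull hw hwmax hxw =>
    have hc : c ∉ st.rej w := by
      intro hmem
      have := propose_not_rejected (hinv.g1 w c hw)
      exact this hmem
    have hterm : (Fintype.card S - (insert c (st.rej w)).card) + 1 =
        Fintype.card S - (st.rej w).card := by
      rw [Finset.card_insert_of_notMem hc]
      have h1 : (insert c (st.rej w)).card ≤ Fintype.card S := by
        rw [← Finset.card_univ]
        exact Finset.card_le_card (Finset.subset_univ _)
      rw [Finset.card_insert_of_notMem hc] at h1
      omega
    have hsum := sum_rej_update st w (insert c (st.rej w)) hterm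
    have hmul : (∑ y : I, (Fintype.card S - (Function.update st.rej w
        (insert c (st.rej w)) y).card)) * (Fintype.card I + 1) + (Fintype.card I + 1) =
        (∑ y : I, (Fintype.card S - (st.rej y).card)) * (Fintype.card I + 1) := by
      rw [← hsum]; ring
    have hxw' : x ≠ w := fun he => by rw [he, hw] at hx; cases hx
    have hfilt : (Finset.univ.filter (fun y : I =>
        Function.update (Function.update st.hold w none) x (some c) y = none)) =
        insert w ((Finset.univ.filter (fun y : I => st.hold y = none)).erase x) := by
      ext y
      by_cases hyx : y = x
      · subst hyx
        simp [Function.update_self, hxw']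
      · rw [Finset.mem_insert]
        by_cases hyw : y = w
        · subst hyw
          simp [Function.update_of_ne hyx, Function.update_self]
        · simp [Function.update_of_ne hyx, Function.update_of_ne hyw, hyx, hyw]
    have hcardf : (insert w ((Finset.univ.filter
        (fun y : I => st.hold y = none)).erase x)).card =
        (Finset.univ.filter (fun y : I => st.hold y = none)).card := by
      have hxmem : x ∈ Finset.univ.filter (fun y : I => st.hold y = none) := by
        simp [hx]
      have hwnot : w ∉ (Finset.univ.filter (fun y : I => st.hold y = none)).erase x := by
        simp [hw]
      rw [Finset.card_insert_of_notMem hwnot, Finset.card_erase_of_mem hxmem]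
      have : 1 ≤ (Finset.univ.filter (fun y : I => st.hold y = none)).card :=
        Finset.card_pos.2 ⟨x, hxmem⟩
      omega
    have hub := hIbound st
    simp only [meas] at *
    rw [hfilt, hcardf]
    omega

/-- From any invariant state one can reach a `D`-terminal state. -/
lemma exists_terminalOn_from (E : Prio I S) (P : I → Pref S) (D : I → Prop) :
    ∀ (n : ℕ) (st : DAState I S), meas st ≤ n → Inv E P st →
    ∃ st', Relation.ReflTransGen (StepOn E P D) st st' ∧ TerminalOn P D st' := by
  intro n
  induction n with
  | zero =>
    intro st hm hinv
    by_cases hT : TerminalOn P D st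
    · exact ⟨st, Relation.ReflTransGen.refl, hT⟩
    · exfalso
      simp only [TerminalOn, not_forall] at hT
      obtain ⟨x, hD, hx, hpne⟩ := hT
      obtain ⟨c, hp⟩ : ∃ c, propose (P x) (st.rej x) = some c := by
        cases hpp : propose (P x) (st.rej x) with
        | none => exact absurd hpp hpne
        | some c => exact ⟨c, rfl⟩
      rcases lt_or_ge (assigned st.hold c).card (E.quota c) with hroom | hfull
      · exact absurd (meas_step hinv (StepOn.accept st x c hD hx hp hroom)) (by omega)
      · by_cases hall : ∀ y ∈ assigned st.hold c, E.higher c y x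
        · exact absurd (meas_step hinv (StepOn.refuse st x c hD hx hp hfull hall))
            (by omega)
        · push_neg at hall
          obtain ⟨y, hy, hyx⟩ := hall
          have hne : assigned st.hold c ≠ ∅ := by
            intro he; rw [he] at hy; exact absurd hy (Finset.notMem_empty y)
          obtain ⟨w, hwmem, hwmax⟩ := Finset.exists_max_image (assigned st.hold c)
            (E.prank c) (Finset.nonempty_of_ne_empty hne)
          have hwmax' : ∀ z ∈ assigned st.hold c, z ≠ w → E.higher c z w := by
            intro z hz hzw
            have := hwmax z hz
            exact lt_of_le_of_ne this fun he => hzw (E.inj c he)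
          have hxy : E.higher c x y := by
            have hne2 : x ≠ y := by
              intro he; rw [← he] at hy
              rw [mem_assigned, hx] at hy; cases hy
            rcases higher_total (E := E) (c := c) hne2 with h | h
            · exact h
            · exact absurd h hyx
          have hxw : E.higher c x w := lt_of_lt_of_le hxy (hwmax y hy)
          exact absurd (meas_step hinv
            (StepOn.displace st x w c hD hx hp hfull (mem_assigned.1 hwmem) hwmax' hxw))
            (by omega)
  | succ n ih =>
    intro st hm hinv
    by_cases hT : TerminalOn P D st
    · exact ⟨st, Relation.ReflTransGen.refl, hT⟩
    · simp only [TerminalOn, not_forall] at hT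
      obtain ⟨x, hD, hx, hpne⟩ := hT
      obtain ⟨c, hp⟩ : ∃ c, propose (P x) (st.rej x) = some c := by
        cases hpp : propose (P x) (st.rej x) with
        | none => exact absurd hpp hpne
        | some c => exact ⟨c, rfl⟩
      have hstep : ∃ st₂, StepOn E P D st st₂ := by
        rcases lt_or_ge (assigned st.hold c).card (E.quota c) with hroom | hfull
        · exact ⟨_, StepOn.accept st x c hD hx hp hroom⟩
        · by_cases hall : ∀ y ∈ assigned st.hold c, E.higher c y x
          · exact ⟨_, StepOn.refuse st x c hD hx hp hfull hall⟩
          · push_neg at hall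
            obtain ⟨y, hy, hyx⟩ := hall
            have hne : assigned st.hold c ≠ ∅ := by
              intro he; rw [he] at hy; exact absurd hy (Finset.notMem_empty y)
            obtain ⟨w, hwmem, hwmax⟩ := Finset.exists_max_image (assigned st.hold c)
              (E.prank c) (Finset.nonempty_of_ne_empty hne)
            have hwmax' : ∀ z ∈ assigned st.hold c, z ≠ w → E.higher c z w := by
              intro z hz hzw
              have := hwmax z hz
              exact lt_of_le_of_ne this fun he => hzw (E.inj c he)
            have hxy : E.higher c x y := by
              have hne2 : x ≠ y := by
                intro he; rw [← he] at hy
                rw [mem_assigned, hx] at hy; cases hy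
              rcases higher_total (E := E) (c := c) hne2 with h | h
              · exact h
              · exact absurd h hyx
            have hxw : E.higher c x w := lt_of_lt_of_le hxy (hwmax y hy)
            exact ⟨_, StepOn.displace st x w c hD hx hp hfull
              (mem_assigned.1 hwmem) hwmax' hxw⟩
      obtain ⟨st₂, hst₂⟩ := hstep
      have hlt := meas_step hinv hst₂
      obtain ⟨st', hr, hT'⟩ := ih st₂ (by omega) (hinv.step hst₂)
      exact ⟨st', Relation.ReflTransGen.head hst₂ hr, hT'⟩

lemma exists_studentOptimal (E : Prio I S) (P : I → Pref S) :
    ∃ μ, StudentOptimal E P μ := by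
  obtain ⟨st, hr, hT⟩ := exists_terminalOn_from E P (fun _ => True) (meas
    (initState (I := I) (S := S))) initState le_rfl (initInv E P)
  exact ⟨st.hold, optimal_of_reach_terminal hr hT⟩

lemma studentOptimal_unique {μ ν : Matching I S} (hμ : StudentOptimal E P μ)
    (hν : StudentOptimal E P ν) : μ = ν := by
  funext j
  have h1 := hμ.2 ν hν.1 j
  have h2 := hν.2 μ hμ.1 j
  exact (P j).inj (le_antisymm h1 h2)

lemma DA_spec (E : Prio I S) (P : I → Pref S) : StudentOptimal E P (DA E P) := by
  rw [DA, dif_pos (exists_studentOptimal E P)]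
  exact (exists_studentOptimal E P).choose_spec

lemma DA_eq {μ : Matching I S} (h : StudentOptimal E P μ) : DA E P = μ :=
  studentOptimal_unique (DA_spec E P) h

lemma DA_stable (E : Prio I S) (P : I → Pref S) : Stable E P (DA E P) :=
  (DA_spec E P).1

end DArun
section LemmaL

variable {I S : Type} [Fintype I] [Fintype S] [DecidableEq I] [DecidableEq S]
variable {E : Prio I S}

/-- Comparative statics lemma: if `P'` agrees with `P` except on students for whom
nothing is `P'`-acceptable, then `DA(P')` makes every agreeing student weakly better
off (w.r.t. `P`) than any `P`-stable matching. -/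
lemma lemmaL {P P' : I → Pref S} {ν : Matching I S} (hν : Stable E P ν)
    (hagree : ∀ l, P l = P' l ∨ ∀ c : S, (P' l).rank none < (P' l).rank (some c)) :
    ∀ j, P j = P' j → (P j).rank (DA E P' j) ≤ (P j).rank (ν j) := by
  obtain ⟨st, hr, hT⟩ := exists_terminalOn_from E P' (fun _ => True)
    (meas (initState (I := I) (S := S))) initState le_rfl (initInv E P')
  have hDA : DA E P' = st.hold := DA_eq (optimal_of_reach_terminal hr hT)
  have hinv : Inv E P' st := (initInv E P').reach hr
  intro j hPj
  have H0 : ∀ j c, P j = P' j → ν j = some c →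
      c ∉ (initState (I := I) (S := S)).rej j := by
    intro j c _ _; simp [initState]
  have H := rejInv_reach hν hagree (initInv E P') hr H0
  have hνmem : ν j ∈ allowedOpts (st.rej j) := by
    cases hνj : ν j with
    | none => exact none_mem_allowedOpts _
    | some d => exact some_mem_allowedOpts.2 (H j d hPj hνj)
  have hmin := propose_min (P' j) (st.rej j) (ν j) hνmem
  rw [hDA, hPj]
  cases hj : st.hold j with
  | none =>
    rw [hT j trivial hj] at hmin
    exact hmin
  | some d =>
    rw [hinv.g1 j d hj] at hmin
    exact hmin

end LemmaL

section TDArounds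

variable {I S : Type} [Fintype I] [Fintype S] [DecidableEq I] [DecidableEq S]

/-- The profile of reported preferences in round `k + 1` of TDA. -/
noncomputable def roundP (E : Prio I S) (t : S → ℕ) (Q : I → Pref S) (k : ℕ) :
    I → Pref S := fun j =>
  if TDAaux E t Q k j = none then trunc (fun s => t s = k + 1) (Q j)
  else trunc (fun _ => False) (Q j)

variable {E : Prio I S} {t : S → ℕ} {Q : I → Pref S}

lemma TDAaux_succ_of_none {k : ℕ} {i : I} (h : TDAaux E t Q k i = none) :
    TDAaux E t Q (k + 1) i = DA E (roundP E t Q k) i := by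
  show (match TDAaux E t Q k i with
    | some s => some s
    | none => DA E (fun j =>
        if TDAaux E t Q k j = none then trunc (fun s => t s = k + 1) (Q j)
        else trunc (fun _ => False) (Q j)) i) = _
  rw [h]
  rfl

lemma TDAaux_succ_of_some {k : ℕ} {i : I} {c : S} (h : TDAaux E t Q k i = some c) :
    TDAaux E t Q (k + 1) i = some c := by
  show (match TDAaux E t Q k i with
    | some s => some s
    | none => DA E (fun j =>
        if TDAaux E t Q k j = none then trunc (fun s => t s = k + 1) (Q j)
        else trunc (fun _ => False) (Q j)) i) = _
  rw [h]

lemma TDAaux_mono {k m : ℕ} {i : I} {c : S} (h : TDAaux E t Q k i = some c)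
    (hkm : k ≤ m) : TDAaux E t Q m i = some c := by
  induction m with
  | zero =>
    have : k = 0 := by omega
    rw [← this]; exact h
  | succ n ih =>
    rcases Nat.lt_or_ge k (n + 1) with hlt | hge
    · exact TDAaux_succ_of_some (ih (by omega))
    · have : k = n + 1 := by omega
      rw [← this]; exact h

lemma not_acc_flip {p : Pref S} {c : S} (h : ¬ p.rank (some c) < p.rank none) :
    p.rank none < p.rank (some c) := by
  rcases Nat.lt_or_ge (p.rank none) (p.rank (some c)) with h1 | h1
  · exact h1
  · exact absurd (rank_lt_of_le_ne h1 (by simp)) (by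
      intro hh
      exact h (by omega))

lemma truncFalse_nothing (p : Pref S) (c : S) :
    (trunc (fun _ => False) p).rank none < (trunc (fun _ => False) p).rank (some c) := by
  apply not_acc_flip
  intro h
  exact ((trunc_acc_iff _ p).1 h).1

lemma roundP_acc {k : ℕ} {j : I} {c : S}
    (h : (roundP E t Q k j).rank (some c) < (roundP E t Q k j).rank none) :
    TDAaux E t Q k j = none ∧ t c = k + 1 ∧ (Q j).rank (some c) < (Q j).rank none := by
  by_cases hj : TDAaux E t Q k j = none
  · rw [roundP, if_pos hj] at h
    have := (trunc_acc_iff _ (Q j)).1 h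
    exact ⟨hj, this.1, this.2⟩
  · rw [roundP, if_neg hj] at h
    exact absurd ((trunc_acc_iff _ (Q j)).1 h).1 (by simp)

lemma roundDA_some {k : ℕ} {j : I} {c : S} (h : DA E (roundP E t Q k) j = some c) :
    TDAaux E t Q k j = none ∧ t c = k + 1 ∧ (Q j).rank (some c) < (Q j).rank none := by
  have hIR := (DA_stable E (roundP E t Q k)).2.1 j
  rw [h] at hIR
  exact roundP_acc (rank_lt_of_le_ne hIR (by simp))

lemma TDAaux_some (ht1 : ∀ s, 1 ≤ t s) {k : ℕ} {j : I} {c : S}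
    (h : TDAaux E t Q k j = some c) :
    t c ≤ k ∧ TDAaux E t Q (t c - 1) j = none ∧
      DA E (roundP E t Q (t c - 1)) j = some c := by
  induction k with
  | zero => exact absurd h (by simp [TDAaux])
  | succ n ih =>
    cases hn : TDAaux E t Q n j with
    | some c' =>
      have := TDAaux_succ_of_some (E := E) hn
      rw [h] at this
      injection this with this
      subst this
      have := ih hn
      exact ⟨by omega, this.2.1, this.2.2⟩
    | none =>
      have hDA : DA E (roundP E t Q n) j = some c := by
        rw [← TDAaux_succ_of_none hn, h]
      have htc := (roundDA_some hDA).2.1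
      have hn1 : t c - 1 = n := by omega
      rw [hn1]
      exact ⟨by omega, hn, hDA⟩

lemma TDAaux_of_roundDA (ht1 : ∀ s, 1 ≤ t s) {j : I} {c : S}
    (h : DA E (roundP E t Q (t c - 1)) j = some c) {m : ℕ} (hm : t c ≤ m) :
    TDAaux E t Q m j = some c := by
  have h0 := roundDA_some h
  have : TDAaux E t Q (t c - 1 + 1) j = some c := by
    rw [TDAaux_succ_of_none h0.1]; exact h
  have h1 : t c - 1 + 1 = t c := by have := ht1 c; omega
  rw [h1] at this
  exact TDAaux_mono this hm

lemma assigned_TDA (ht1 : ∀ s, 1 ≤ t s) (c : S) :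
    assigned (TDA E t Q) c = assigned (DA E (roundP E t Q (t c - 1))) c := by
  ext j
  rw [mem_assigned, mem_assigned]
  constructor
  · intro h
    exact (TDAaux_some ht1 h).2.2
  · intro h
    exact TDAaux_of_roundDA ht1 h (Finset.le_sup (Finset.mem_univ c))

end TDArounds
section DirectionBack

variable {I S : Type} [Fintype I] [Fintype S] [DecidableEq I] [DecidableEq S]
variable {E : Prio I S} {t : S → ℕ} {R : I → Pref S} {μ : Matching I S}

/-- The part of `μ` in tiers `≤ k`. -/
noncomputable def upTo (t : S → ℕ) (μ : Matching I S) (k : ℕ) : Matching I S := fun j =>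
  match μ j with
  | some c => if t c ≤ k then some c else none
  | none => none

/-- The part of `μ` in tier `k`. -/
noncomputable def atTier (t : S → ℕ) (μ : Matching I S) (k : ℕ) : Matching I S := fun j =>
  match μ j with
  | some c => if t c = k then some c else none
  | none => none

lemma upTo_eq_some {k : ℕ} {j : I} {c : S} :
    upTo t μ k j = some c ↔ (μ j = some c ∧ t c ≤ k) := by
  unfold upTo
  cases hj : μ j with
  | none => simp
  | some d =>
    by_cases hd : t d ≤ k
    · simp only [if_pos hd]
      constructor
      · rintro rfl2
        injection rfl2 with h2
        subst h2
        exact ⟨rfl, hd⟩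
      · rintro ⟨h1, h2⟩
        injection h1 with h1; subst h1; rfl
    · simp only [if_neg hd]
      constructor
      · intro h; cases h
      · rintro ⟨h1, h2⟩
        injection h1 with h1; subst h1; exact absurd h2 hd
lemma atTier_eq_some {k : ℕ} {j : I} {c : S} :
    atTier t μ k j = some c ↔ (μ j = some c ∧ t c = k) := by
  unfold atTier
  cases hj : μ j with
  | none => simp
  | some d =>
    by_cases hd : t d = k
    · simp only [if_pos hd]
      constructor
      · rintro rfl2
        injection rfl2 with h2
        subst h2
        exact ⟨rfl, hd⟩
      · rintro ⟨h1, h2⟩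
        injection h1 with h1; subst h1; rfl
    · simp only [if_neg hd]
      constructor
      · intro h; cases h
      · rintro ⟨h1, h2⟩
        injection h1 with h1; subst h1; exact absurd h2 hd

/-- In the round `k+1` market where everyone reports only his `μ`-school acceptable,
the tier-`(k+1)` part of `μ` is the student-optimal stable matching. -/
lemma onlyPref_round_SO (hfeas : Feasible E μ) (k : ℕ) :
    StudentOptimal E (fun j => if upTo t μ k j = none
      then trunc (fun s => t s = k + 1) (onlyPref (μ j))
      else trunc (fun _ => False) (onlyPref (μ j))) (atTier t μ (k + 1)) := by
  set P : I → Pref S := fun j => if upTo t μ k j = none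
      then trunc (fun s => t s = k + 1) (onlyPref (μ j))
      else trunc (fun _ => False) (onlyPref (μ j)) with hP
  have hsub : ∀ c, assigned (atTier t μ (k + 1)) c ⊆ assigned μ c := by
    intro c x hx
    rw [mem_assigned] at hx ⊢
    exact (atTier_eq_some.1 hx).1
  have hrank0 : ∀ {x c}, atTier t μ (k + 1) x = some c → (P x).rank (some c) = 0 := by
    intro x c hx
    obtain ⟨hμx, htc⟩ := atTier_eq_some.1 hx
    have hup : upTo t μ k x = none := by
      cases hu : upTo t μ k x with
      | none => rfl
      | some d =>
        obtain ⟨h1, h2⟩ := upTo_eq_some.1 hu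
        rw [hμx] at h1; injection h1 with h1; subst h1
        omega
    have hPx : P x = trunc (fun s => t s = k + 1) (onlyPref (μ x)) := by
      rw [hP]; dsimp only; rw [if_pos hup]
    rw [hPx, trunc_rank_some_mem (fun s => t s = k + 1) (onlyPref (μ x)) htc, hμx]
    exact onlyPref_rank_self (some c)
  have hIR : IndivRat P (atTier t μ (k + 1)) := by
    intro x
    cases hx : atTier t μ (k + 1) x with
    | none => exact le_rfl
    | some c =>
      rw [hrank0 hx]
      exact Nat.zero_le _
  have hnomatch : ∀ {x}, atTier t μ (k + 1) x = none →
      ∀ c, ¬ (P x).rank (some c) < (P x).rank none := by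
    intro x hx c hacc
    by_cases hu : upTo t μ k x = none
    · rw [hP] at hacc
      simp only [if_pos hu] at hacc
      obtain ⟨h1, h2⟩ := (trunc_acc_iff _ _).1 hacc
      have := onlyPref_acc_iff.1 h2
      have : atTier t μ (k + 1) x = some c := atTier_eq_some.2 ⟨this, h1⟩
      rw [hx] at this; cases this
    · rw [hP] at hacc
      simp only [if_neg hu] at hacc
      exact absurd ((trunc_acc_iff _ _).1 hacc).1 (by simp)
  refine ⟨⟨?_, hIR, ?_⟩, ?_⟩
  · intro c
    exact le_trans (Finset.card_le_card (hsub c)) (hfeas c)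
  · rintro x c ⟨hpref, _⟩
    cases hx : atTier t μ (k + 1) x with
    | none =>
      rw [hx] at hpref
      exact hnomatch hx c hpref
    | some d =>
      rw [hx] at hpref
      rw [hrank0 hx] at hpref
      omega
  · intro ν hν x
    cases hx : atTier t μ (k + 1) x with
    | some c =>
      rw [hrank0 hx]
      exact Nat.zero_le _
    | none =>
      have hνx : ν x = none := by
        cases hνx : ν x with
        | none => rfl
        | some d =>
          have hIRν := hν.2.1 x
          rw [hνx] at hIRν
          have : (P x).rank (some d) < (P x).rank none :=
            rank_lt_of_le_ne hIRν (by simp)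
          exact absurd this (hnomatch hx d)
      rw [hνx]

lemma TDAaux_onlyPref (ht1 : ∀ s, 1 ≤ t s) (hfeas : Feasible E μ) (k : ℕ) :
    TDAaux E t (fun j => onlyPref (μ j)) k = upTo t μ k := by
  induction k with
  | zero =>
    funext j
    show (none : Option S) = upTo t μ 0 j
    unfold upTo
    cases hj : μ j with
    | none => rfl
    | some c =>
      dsimp only
      rw [if_neg (show ¬ t c ≤ 0 by have := ht1 c; omega)]
  | succ n ih =>
    funext j
    cases hj : upTo t μ n j with
    | some c =>
      rw [TDAaux_succ_of_some (by rw [ih]; exact hj)]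
      obtain ⟨h1, h2⟩ := upTo_eq_some.1 hj
      exact (upTo_eq_some.2 ⟨h1, by omega⟩).symm
    | none =>
      rw [TDAaux_succ_of_none (by rw [ih]; exact hj)]
      have hround : roundP E t (fun j => onlyPref (μ j)) n = fun j =>
          if upTo t μ n j = none
          then trunc (fun s => t s = n + 1) (onlyPref (μ j))
          else trunc (fun _ => False) (onlyPref (μ j)) := by
        funext x
        rw [roundP, ih]
      rw [hround, DA_eq (onlyPref_round_SO hfeas n)]
      have htc : ∀ c, μ j = some c → ¬ t c ≤ n := by
        intro c hc hh
        have : upTo t μ n j = some c := upTo_eq_some.2 ⟨hc, hh⟩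
        rw [hj] at this; cases this
      unfold upTo atTier
      cases hμj : μ j with
      | none => rfl
      | some c =>
        dsimp only
        have htc' := htc c hμj
        by_cases he : t c = n + 1
        · rw [if_pos he, if_pos (by omega)]
        · rw [if_neg he, if_neg (by omega)]

lemma TDA_onlyPref (ht1 : ∀ s, 1 ≤ t s) (hfeas : Feasible E μ) :
    TDA E t (fun j => onlyPref (μ j)) = μ := by
  rw [TDA, TDAaux_onlyPref ht1 hfeas]
  funext j
  unfold upTo
  cases hj : μ j with
  | none => rfl
  | some c =>
    dsimp only
    rw [if_pos (Finset.le_sup (Finset.mem_univ c))]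

lemma onlyPref_NashEq (ht1 : ∀ s, 1 ≤ t s) (hμ : Stable E R μ) :
    NashEq R (TDA E t) (fun j => onlyPref (μ j)) := by
  intro i Qi'
  rw [TDA_onlyPref ht1 hμ.1]
  by_contra hcon
  push_neg at hcon
  set Q' := Function.update (fun j => onlyPref (μ j)) i Qi' with hQ'
  cases hm : TDA E t Q' i with
  | none =>
    rw [hm] at hcon
    have := hμ.2.1 i
    omega
  | some s =>
    rw [hm] at hcon
    have hine : μ i ≠ some s := by
      intro he; rw [he] at hcon; omega
    have hnb := hμ.2.2 i s
    rw [Blocks] at hnb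
    push_neg at hnb
    have hdisj := hnb hcon
    have hquota : E.quota s ≤ (assigned μ s).card := by
      have := hdisj.1; omega
    have habove : ∀ j ∈ assigned μ s, E.higher s j i := by
      intro j hj
      rw [mem_assigned] at hj
      have h1 := hdisj.2 j hj
      have hji : j ≠ i := by
        intro he; rw [he] at hj; exact hine hj
      rcases higher_total (E := E) (c := s) hji with h | h
      · exact h
      · exact absurd h h1
    have hiW : i ∉ assigned μ s := by
      rw [mem_assigned]; exact hine
    -- the deviation gets i the school s in round t s
    have hTD := TDAaux_some (E := E) (Q := Q') ht1 (k := Finset.univ.sup t)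
      (j := i) (c := s) hm
    set k₀ := t s - 1 with hk₀
    have hk₀1 : k₀ + 1 = t s := by have := ht1 s; omega
    have hσi : DA E (roundP E t Q' k₀) i = some s := hTD.2.2
    -- all students of `assigned μ s` are unmatched before round t s under Q'
    have hWnone : ∀ j ∈ assigned μ s, ∀ m, m ≤ k₀ → TDAaux E t Q' m j = none := by
      intro j hj m
      have hji : j ≠ i := fun he => hiW (he ▸ hj)
      induction m with
      | zero => intro _; rfl
      | succ n ih2 =>
        intro hn
        have hprev := ih2 (by omega)
        rw [TDAaux_succ_of_none hprev]
        cases hD : DA E (roundP E t Q' n) j with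
        | none => rfl
        | some c =>
          exfalso
          obtain ⟨h1, h2, h3⟩ := roundDA_some hD
          have hQj : Q' j = onlyPref (μ j) := Function.update_of_ne hji _ _
          rw [hQj] at h3
          have := onlyPref_acc_iff.1 h3
          rw [mem_assigned] at hj
          rw [hj] at this
          injection this with this
          subst this
          omega
    -- round t s analysis
    set P' := roundP E t Q' k₀ with hP'
    have hσst := DA_stable E P'
    have hex : ∃ j ∈ assigned μ s, DA E P' j ≠ some s := by
      by_contra hall
      push_neg at hall
      have hsubW : insert i (assigned μ s) ⊆ assigned (DA E P') s := by
        intro z hz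
        rcases Finset.mem_insert.1 hz with rfl | hz
        · exact mem_assigned.2 hσi
        · exact mem_assigned.2 (hall z hz)
      have hcard := Finset.card_le_card hsubW
      rw [Finset.card_insert_of_notMem hiW] at hcard
      have := hσst.1 s
      omega
    obtain ⟨j, hjW, hjne⟩ := hex
    have hji : j ≠ i := fun he => hiW (he ▸ hjW)
    have hQj : Q' j = onlyPref (μ j) := Function.update_of_ne hji _ _
    have hPj : P' j = trunc (fun s' => t s' = k₀ + 1) (onlyPref (μ j)) := by
      rw [hP', roundP, if_pos (hWnone j hjW k₀ le_rfl), hQj]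
    have hμj : μ j = some s := mem_assigned.1 hjW
    have hrs : (P' j).rank (some s) = 0 := by
      rw [hPj, trunc_rank_some_mem _ _ (by omega), hμj]
      exact onlyPref_rank_self (some s)
    apply hσst.2.2 j s
    constructor
    · rw [hrs]
      have : (P' j).rank (DA E P' j) ≠ 0 := by
        rw [← hrs]
        intro he
        exact hjne ((P' j).inj he)
      omega
    · exact Or.inr ⟨i, hσi, habove j hjW⟩

lemma stable_to_nashOutcome {T : ℕ} (ht : IsTierStructure t T) (hμ : Stable E R μ) :
    NashOutcome R (TDA E t) μ :=
  ⟨fun j => onlyPref (μ j), onlyPref_NashEq (fun s => (ht.1 s).1) hμ,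
    TDA_onlyPref (fun s => (ht.1 s).1) hμ.1⟩

end DirectionBack
section LemmaH

variable {I S : Type} [Fintype I] [Fintype S] [DecidableEq I] [DecidableEq S]
variable {E : Prio I S} {P : I → Pref S} {D : I → Prop} {st st' : DAState I S}

lemma not_assigned_of_hold_none {x : I} {c : S} (hx : st.hold x = none) :
    x ∉ assigned st.hold c := by
  rw [mem_assigned, hx]; simp

lemma not_assigned_of_hold_other {x : I} {c d : S} (hx : st.hold x = some d)
    (h : d ≠ c) : x ∉ assigned st.hold c := by
  rw [mem_assigned, hx]
  intro he; injection he with he; exact h he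

lemma not_assigned_of_rej (hinv : Inv E P st) {x : I} {c : S} (h : c ∈ st.rej x) :
    x ∉ assigned st.hold c := fun hm =>
  propose_not_rejected (hinv.g1 x c (mem_assigned.1 hm)) h

/-- Build an Ergin cycle from a state of the algorithm. -/
lemma cycle_from_state (t : S → ℕ) (r : ℕ) (hinv : Inv E P st)
    {a b : S} {x y δ : I}
    (hta : t a = r) (htb : t b = r) (hab : a ≠ b)
    (h1 : E.higher a x y) (h2 : E.higher a y δ) (h3 : E.higher b δ x)
    (hfa : E.quota a ≤ (assigned st.hold a).card)
    (hya : y ∈ assigned st.hold a)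
    (hamem : ∀ l ∈ assigned st.hold a, l ≠ y → E.higher a l y)
    (hxa : x ∉ assigned st.hold a) (hδa : δ ∉ assigned st.hold a)
    (hfb : E.quota b ≤ (assigned st.hold b).card)
    (hbabove : ∀ l ∈ assigned st.hold b, E.higher b l x)
    (hxb : x ∉ assigned st.hold b) (hyb : y ∉ assigned st.hold b) :
    Cycle E (fun c => t c = r) := by
  have hca : (assigned st.hold a).card = E.quota a := le_antisymm (hinv.g2 a) hfa
  have hcb : (assigned st.hold b).card = E.quota b := le_antisymm (hinv.g2 b) hfb
  have hbcard : E.quota b - 1 ≤ ((assigned st.hold b).erase δ).card := by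
    by_cases hδb : δ ∈ assigned st.hold b
    · rw [Finset.card_erase_of_mem hδb]; omega
    · rw [Finset.erase_eq_of_notMem hδb]; omega
  obtain ⟨Fb, hFbsub, hFbcard⟩ := Finset.exists_subset_card_eq hbcard
  refine ⟨a, b, hta, htb, hab, x, y, δ, h1, h2, h3,
    (assigned st.hold a).erase y, Fb, ?_, ?_, ?_, ?_, hFbcard⟩
  · rw [Finset.disjoint_left]
    intro l hla hlb
    have h1 : st.hold l = some a := mem_assigned.1 (Finset.mem_of_mem_erase hla)
    have h2 : st.hold l = some b :=
      mem_assigned.1 (Finset.mem_of_mem_erase (hFbsub hlb))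
    rw [h1] at h2; injection h2 with h2; exact hab h2
  · intro l hl
    have hlm := Finset.mem_of_mem_erase hl
    exact ⟨fun he => hxa (he ▸ hlm), Finset.ne_of_mem_erase hl,
      fun he => hδa (he ▸ hlm), hamem l hlm (Finset.ne_of_mem_erase hl)⟩
  · intro l hl
    have hlm := Finset.mem_of_mem_erase (hFbsub hl)
    exact ⟨fun he => hxb (he ▸ hlm), fun he => hyb (he ▸ hlm),
      Finset.ne_of_mem_erase (hFbsub hl), hbabove l hlm⟩
  · rw [Finset.card_erase_of_mem hya, hca]

/-- The set of students matched to a school only shrinks on other schools... helper: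
states reachable with all actors in `D`. -/
lemma stepOn_mono {D D' : I → Prop} (h : ∀ x, D x → D' x)
    (hs : StepOn E P D st st') : StepOn E P D' st st' := by
  cases hs with
  | accept x c hD hx hp hroom => exact StepOn.accept st x c (h x hD) hx hp hroom
  | refuse x c hD hx hp hfull hworst => exact StepOn.refuse st x c (h x hD) hx hp hfull hworst
  | displace x w c hD hx hp hfull hw hwmax hxw =>
    exact StepOn.displace st x w c (h x hD) hx hp hfull hw hwmax hxw

lemma reach_mono {D D' : I → Prop} (h : ∀ x, D x → D' x)
    (hr : Relation.ReflTransGen (StepOn E P D) st st') :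
    Relation.ReflTransGen (StepOn E P D') st st' := by
  induction hr with
  | refl => exact Relation.ReflTransGen.refl
  | tail h₁ h₂ ih => exact Relation.ReflTransGen.tail ih (stepOn_mono h h₂)

lemma stepOn_transfer {P P' : I → Pref S} (hs : StepOn E P D st st')
    (h : ∀ x, D x → (P' x = P x ∨ ∀ c : S, (P x).rank none < (P x).rank (some c))) :
    StepOn E P' D st st' := by
  cases hs with
  | accept x c hD hx hp hroom =>
    rcases h x hD with he | hnone
    · exact StepOn.accept st x c hD hx (by rw [he]; exact hp) hroom
    · exact absurd (propose_acc hp) (by have := hnone c; omega)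
  | refuse x c hD hx hp hfull hworst =>
    rcases h x hD with he | hnone
    · exact StepOn.refuse st x c hD hx (by rw [he]; exact hp) hfull hworst
    · exact absurd (propose_acc hp) (by have := hnone c; omega)
  | displace x w c hD hx hp hfull hw hwmax hxw =>
    rcases h x hD with he | hnone
    · exact StepOn.displace st x w c hD hx (by rw [he]; exact hp) hfull hw hwmax hxw
    · exact absurd (propose_acc hp) (by have := hnone c; omega)

lemma reach_transfer {P P' : I → Pref S}
    (hr : Relation.ReflTransGen (StepOn E P D) st st')
    (h : ∀ x, D x → (P' x = P x ∨ ∀ c : S, (P x).rank none < (P x).rank (some c))) :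
    Relation.ReflTransGen (StepOn E P' D) st st' := by
  induction hr with
  | refl => exact Relation.ReflTransGen.refl
  | tail h₁ h₂ ih => exact Relation.ReflTransGen.tail ih (stepOn_transfer h₂ h)

lemma untouched_step {i : I} (hs : StepOn E P (fun y => y ≠ i) st st')
    (h : st.hold i = none ∧ st.rej i = ∅) :
    st'.hold i = none ∧ st'.rej i = ∅ := by
  cases hs with
  | accept x c hD hx hp hroom =>
    exact ⟨by dsimp only; rw [Function.update_of_ne (Ne.symm hD)]; exact h.1, h.2⟩
  | refuse x c hD hx hp hfull hworst =>
    exact ⟨h.1, by dsimp only; rw [Function.update_of_ne (Ne.symm hD)]; exact h.2⟩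
  | displace x w c hD hx hp hfull hw hwmax hxw =>
    have hwi : w ≠ i := by
      intro he; rw [he, h.1] at hw; cases hw
    refine ⟨?_, ?_⟩
    · dsimp only
      rw [Function.update_of_ne (Ne.symm hD), Function.update_of_ne (Ne.symm hwi)]
      exact h.1
    · dsimp only
      rw [Function.update_of_ne (Ne.symm hwi)]
      exact h.2

lemma untouched_reach {i : I}
    (hr : Relation.ReflTransGen (StepOn E P (fun y => y ≠ i)) st st')
    (h : st.hold i = none ∧ st.rej i = ∅) :
    st'.hold i = none ∧ st'.rej i = ∅ := by
  induction hr with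
  | refl => exact h
  | tail h₁ h₂ ih => exact untouched_step h₂ ih

/-- Only the token can be active. -/
def TokOnly (P : I → Pref S) (st : DAState I S) (x : I) : Prop :=
  st.hold x = none ∧ ∀ y, y ≠ x → st.hold y = none → propose (P y) (st.rej y) = none

end LemmaH
section P2runSec

variable {I S : Type} [Fintype I] [Fintype S] [DecidableEq I] [DecidableEq S]
variable {E : Prio I S}

/-- The main induction of phase 2: the inserted student `i` holds his seat at `s`
until the end, unless a priority cycle exists. -/
lemma P2run (t : S → ℕ) (r : ℕ) (hacyc : ¬ Cycle E (fun c => t c = r))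
    (P : I → Pref S) (i : I) (s : S) (hts : t s = r)
    (htier : ∀ (j : I) (c : S), (P j).rank (some c) < (P j).rank none → t c = r) :
    ∀ (n : ℕ) (st : DAState I S) (x : I), meas st ≤ n → Inv E P st →
      TokOnly P st x → st.hold i = some s → x ≠ i →
      ((∃ δ c, E.higher s i δ ∧ s ∈ st.rej δ ∧ δ ≠ i ∧
          E.higher c δ x ∧ c ≠ s ∧ t c = r ∧ c ∈ st.rej x ∧
          E.quota c ≤ (assigned st.hold c).card ∧
          (∀ y ∈ assigned st.hold c, E.higher c y x))
        ∨ (E.higher s i x ∧ s ∈ st.rej x)) →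
      ∃ st', Relation.ReflTransGen (StepOn E P (fun _ => True)) st st' ∧
        TerminalOn P (fun _ => True) st' ∧ st'.hold i = some s := by
  intro n
  induction n using Nat.strong_induction_on with
  | _ n ih =>
  intro st x hm hinv htok hi hxi hcase
  cases hpx : propose (P x) (st.rej x) with
  | none =>
    refine ⟨st, Relation.ReflTransGen.refl, ?_, hi⟩
    intro y _ hy
    by_cases hyx : y = x
    · subst hyx; exact hpx
    · exact htok.2 y hyx hy
  | some c' =>
    have hc'r : t c' = r := htier x c' (propose_acc hpx)
    have hc'notrej : c' ∉ st.rej x := propose_not_rejected hpx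
    rcases lt_or_ge (assigned st.hold c').card (E.quota c') with hroom | hfull
    · -- accepted: the algorithm terminates
      refine ⟨_, Relation.ReflTransGen.single
        (StepOn.accept st x c' trivial htok.1 hpx hroom), ?_, ?_⟩
      · intro y _ hy
        dsimp only at hy
        by_cases hyx : y = x
        · subst hyx; rw [Function.update_self] at hy; cases hy
        · rw [Function.update_of_ne hyx] at hy
          exact htok.2 y hyx hy
      · dsimp only
        rw [Function.update_of_ne (Ne.symm hxi)]
        exact hi
    · by_cases hall : ∀ y ∈ assigned st.hold c', E.higher c' y x
      · -- refused: same token continues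
        have hstep := StepOn.refuse (D := fun _ => True) st x c' trivial htok.1 hpx hfull hall
        have hlt := meas_step hinv hstep
        have htok2 : TokOnly P ⟨st.hold, Function.update st.rej x
            (insert c' (st.rej x))⟩ x := by
          refine ⟨htok.1, ?_⟩
          intro y hyx hy
          dsimp only
          rw [Function.update_of_ne hyx]
          exact htok.2 y hyx hy
        have hcase2 := hcase
        obtain ⟨st', hr, hT, hi'⟩ := ih (meas ⟨st.hold, Function.update st.rej x
            (insert c' (st.rej x))⟩) (by omega) _ x le_rfl (hinv.step hstep) htok2 hi hxi
          (by
            rcases hcase2 with ⟨δ, c, h1, h2, h3, h4, h5, h6, h7, h8, h9⟩ | ⟨h1, h2⟩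
            · refine Or.inl ⟨δ, c, h1, ?_, h3, h4, h5, h6, ?_, h8, h9⟩
              · dsimp only
                rw [Function.update_of_ne (higher_ne h4)]
                exact h2
              · dsimp only
                rw [Function.update_self]
                exact Finset.mem_insert_of_mem h7
            · refine Or.inr ⟨h1, ?_⟩
              dsimp only
              rw [Function.update_self]
              exact Finset.mem_insert_of_mem h2)
        exact ⟨st', Relation.ReflTransGen.head hstep hr, hT, hi'⟩
      · -- displacement
        push_neg at hall
        obtain ⟨y₀, hy₀, hy₀x⟩ := hall
        have hne : (assigned st.hold c').Nonempty := ⟨y₀, hy₀⟩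
        obtain ⟨w, hwmem, hwmax⟩ := Finset.exists_max_image (assigned st.hold c')
          (E.prank c') hne
        have hwmax' : ∀ z ∈ assigned st.hold c', z ≠ w → E.higher c' z w := by
          intro z hz hzw
          exact lt_of_le_of_ne (hwmax z hz) fun he => hzw (E.inj c' he)
        have hxw : E.higher c' x w := by
          have hne2 : x ≠ y₀ := by
            intro he; rw [← he] at hy₀
            exact not_assigned_of_hold_none htok.1 hy₀
          have hxy : E.higher c' x y₀ := by
            rcases higher_total (E := E) (c := c') hne2 with h | h
            · exact h
            · exact absurd h hy₀x
          exact lt_of_lt_of_le hxy (hwmax y₀ hy₀)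
        have hwhold : st.hold w = some c' := mem_assigned.1 hwmem
        have hwx : w ≠ x := by
          intro he; rw [he, htok.1] at hwhold; cases hwhold
        have hstep := StepOn.displace (D := fun _ => True) st x w c' trivial htok.1 hpx hfull
          hwhold hwmax' hxw
        have hlt := meas_step hinv hstep
        set st₂ : DAState I S := ⟨Function.update (Function.update st.hold w none) x
          (some c'), Function.update st.rej w (insert c' (st.rej w))⟩ with hst₂
        have hass2 : ∀ d, assigned st₂.hold d =
            if d = c' then insert x ((assigned st.hold c').erase w)
            else assigned st.hold d := by
          intro d
          exact assigned_displace st.hold htok.1 hwhold d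
        by_cases hc's : c' = s
        · -- displacement at s
          subst hc's
          by_cases hwi : w = i
          · -- the inserted student is displaced: derive a cycle
            subst hwi
            exfalso
            rcases hcase with ⟨δ, c, h1, h2, h3, h4, h5, h6, h7, h8, h9⟩ | ⟨h1, h2⟩
            · apply hacyc
              refine cycle_from_state t r hinv hts h6 (Ne.symm h5) hxw h1 h4
                hfull hwmem hwmax' (not_assigned_of_hold_none htok.1)
                (not_assigned_of_rej hinv h2) h8 h9
                (not_assigned_of_hold_none htok.1) ?_
              exact not_assigned_of_hold_other hwhold (fun he => h5 he.symm)
            · exact hc'notrej h2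
          · -- someone else is displaced from s: re-root
            have htok2 : TokOnly P st₂ w := by
              refine ⟨?_, ?_⟩
              · rw [hst₂]; dsimp only
                rw [Function.update_of_ne hwx, Function.update_self]
              · intro y hyw hy
                rw [hst₂] at hy ⊢
                dsimp only at hy ⊢
                by_cases hyx : y = x
                · subst hyx
                  rw [Function.update_self] at hy; cases hy
                · rw [Function.update_of_ne hyx, Function.update_of_ne hyw] at hy
                  rw [Function.update_of_ne hyw]
                  exact htok.2 y hyx hy
            have hi2 : st₂.hold i = some c' := by
              rw [hst₂]; dsimp only
              rw [Function.update_of_ne (Ne.symm hxi), Function.update_of_ne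
                (fun he => hwi he.symm)]
              exact hi
            have hiw : E.higher c' i w :=
              hwmax' i (mem_assigned.2 hi) (fun he => hwi he.symm)
            obtain ⟨st', hr, hT, hi'⟩ := ih (meas st₂) (by omega) st₂ w le_rfl
              (hinv.step hstep) htok2 hi2 hwi
              (Or.inr ⟨hiw, by
                rw [hst₂]; dsimp only
                rw [Function.update_self]
                exact Finset.mem_insert_self _ _⟩)
            exact ⟨st', Relation.ReflTransGen.head hstep hr, hT, hi'⟩
        · -- displacement at c' ≠ s
          have hwi : w ≠ i := by
            intro he
            rw [he, hi] at hwhold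
            injection hwhold with hh
            exact hc's hh.symm
          have htok2 : TokOnly P st₂ w := by
            refine ⟨?_, ?_⟩
            · rw [hst₂]; dsimp only
              rw [Function.update_of_ne hwx, Function.update_self]
            · intro y hyw hy
              rw [hst₂] at hy ⊢
              dsimp only at hy ⊢
              by_cases hyx : y = x
              · subst hyx
                rw [Function.update_self] at hy; cases hy
              · rw [Function.update_of_ne hyx, Function.update_of_ne hyw] at hy
                rw [Function.update_of_ne hyw]
                exact htok.2 y hyx hy
          have hi2 : st₂.hold i = some s := by
            rw [hst₂]; dsimp only
            rw [Function.update_of_ne (Ne.symm hxi), Function.update_of_ne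
              (fun he => hwi he.symm)]
            exact hi
          have hfull2 : E.quota c' ≤ (assigned st₂.hold c').card := by
            rw [hass2 c', if_pos rfl, displace_card htok.1 hwhold]
            exact hfull
          have habove2 : ∀ y ∈ assigned st₂.hold c', E.higher c' y w := by
            intro y hy
            rw [hass2 c', if_pos rfl] at hy
            rcases Finset.mem_insert.1 hy with rfl | hy
            · exact hxw
            · exact hwmax' y (Finset.mem_of_mem_erase hy) (Finset.ne_of_mem_erase hy)
          have hc'rej2 : c' ∈ st₂.rej w := by
            rw [hst₂]; dsimp only
            rw [Function.update_self]
            exact Finset.mem_insert_self _ _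
          rcases hcase with ⟨δ, c, h1, h2, h3, h4, h5, h6, h7, h8, h9⟩ | ⟨h1, h2⟩
          · -- case A
            by_cases hδw : δ = w
            · -- the token is the chain head again: back to case B
              subst hδw
              obtain ⟨st', hr, hT, hi'⟩ := ih (meas st₂) (by omega) st₂ δ le_rfl
                (hinv.step hstep) htok2 hi2 h3
                (Or.inr ⟨h1, by
                  rw [hst₂]; dsimp only
                  rw [Function.update_self]
                  exact Finset.mem_insert_of_mem h2⟩)
              exact ⟨st', Relation.ReflTransGen.head hstep hr, hT, hi'⟩
            · rcases higher_total (E := E) (c := c') hδw with hδw2 | hwδ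
              · -- δ still above the token: continue in case A with school c'
                obtain ⟨st', hr, hT, hi'⟩ := ih (meas st₂) (by omega) st₂ w le_rfl
                  (hinv.step hstep) htok2 hi2 hwi
                  (Or.inl ⟨δ, c', h1, by
                      rw [hst₂]; dsimp only
                      rw [Function.update_of_ne hδw]
                      exact h2, h3, hδw2, hc's, hc'r, hc'rej2, hfull2, habove2⟩)
                exact ⟨st', Relation.ReflTransGen.head hstep hr, hT, hi'⟩
              · -- the token has passed above δ: cycle
                exfalso
                apply hacyc
                have hcc' : c' ≠ c := by
                  intro he; rw [he] at hc'notrej; exact hc'notrej h7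
                refine cycle_from_state t r hinv hc'r h6 hcc' hxw hwδ h4
                  hfull hwmem hwmax' (not_assigned_of_hold_none htok.1) ?_
                  h8 h9 (not_assigned_of_hold_none htok.1) ?_
                · intro hm
                  exact absurd (hwmax' δ hm hδw) (by
                    simp only [Prio.higher] at hwδ ⊢; omega)
                · exact not_assigned_of_hold_other hwhold hcc'
          · -- case B: the token was the chain head; now in case A
            obtain ⟨st', hr, hT, hi'⟩ := ih (meas st₂) (by omega) st₂ w le_rfl
              (hinv.step hstep) htok2 hi2 hwi
              (Or.inl ⟨x, c', h1, by
                  rw [hst₂]; dsimp only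
                  rw [Function.update_of_ne hwx.symm]
                  exact h2, hxi, hxw, hc's, hc'r, hc'rej2, hfull2, habove2⟩)
            exact ⟨st', Relation.ReflTransGen.head hstep hr, hT, hi'⟩

end P2runSec
section LemmaHMain

variable {I S : Type} [Fintype I] [Fintype S] [DecidableEq I] [DecidableEq S]
variable {E : Prio I S}

/-- The key manipulation lemma: if `(i, s)` blocks the outcome `DA E P` on priority
grounds, and priorities have no cycle within the relevant tier, then `i` obtains `s`
by reporting only `s` acceptable. -/
lemma lemmaH (t : S → ℕ) (r : ℕ) (hacyc : ¬ Cycle E (fun c => t c = r))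
    (P Phat : I → Pref S) (i : I) (s : S) (hts : t s = r)
    (hPhat_top : ∀ o, o ≠ some s → (Phat i).rank (some s) < (Phat i).rank o)
    (htier : ∀ (j : I) (c : S), (Phat j).rank (some c) < (Phat j).rank none → t c = r)
    (hagree : ∀ j, j ≠ i →
      P j = Phat j ∨ ∀ c : S, (Phat j).rank none < (Phat j).rank (some c))
    (hblock : (assigned (DA E P) s).card < E.quota s ∨
      ∃ j, DA E P j = some s ∧ E.higher s i j) :
    DA E Phat i = some s := by
  -- phase 1: run the algorithm for everybody except i
  obtain ⟨st₁, hr₁, hT₁⟩ := exists_terminalOn_from E Phat (fun y => y ≠ i)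
    (meas (initState (I := I) (S := S))) initState le_rfl (initInv E Phat)
  have hinv₁ : Inv E Phat st₁ := (initInv E Phat).reach hr₁
  have huntouched := untouched_reach hr₁ ⟨rfl, rfl⟩
  have hpi : propose (Phat i) (st₁.rej i) = some s := by
    rw [huntouched.2]
    exact propose_of_top (by simp) hPhat_top
  rcases lt_or_ge (assigned st₁.hold s).card (E.quota s) with hroom | hfull
  · -- i is accepted at once and the algorithm stops
    have hstep := StepOn.accept (D := fun _ => True) st₁ i s trivial huntouched.1
      hpi hroom
    have hreach : Relation.ReflTransGen (StepOn E Phat (fun _ => True))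
        (initState (I := I) (S := S)) _ :=
      Relation.ReflTransGen.tail (reach_mono (fun x _ => trivial) hr₁) hstep
    have hterm : TerminalOn Phat (fun _ => True)
        (⟨Function.update st₁.hold i (some s), st₁.rej⟩ : DAState I S) := by
      intro y _ hy
      dsimp only at hy
      by_cases hyi : y = i
      · subst hyi; rw [Function.update_self] at hy; cases hy
      · rw [Function.update_of_ne hyi] at hy
        exact hT₁ y hyi hy
    rw [DA_eq (optimal_of_reach_terminal hreach hterm)]
    dsimp only
    rw [Function.update_self]
  · by_cases hall : ∀ y ∈ assigned st₁.hold s, E.higher s y i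
    · -- case (a): s was already full of better students; contradicts the block
      exfalso
      have hrP : Relation.ReflTransGen (StepOn E P (fun y => y ≠ i))
          (initState (I := I) (S := S)) st₁ :=
        reach_transfer hr₁ (fun x hx => hagree x hx)
      have hinvP : Inv E P st₁ := (initInv E P).reach hrP
      obtain ⟨stf, hr₂, hT₂⟩ := exists_terminalOn_from E P (fun _ => True)
        (meas st₁) st₁ le_rfl hinvP
      have hreach : Relation.ReflTransGen (StepOn E P (fun _ => True))
          (initState (I := I) (S := S)) stf :=
        Relation.ReflTransGen.trans (reach_mono (fun x _ => trivial) hrP) hr₂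
      have hDA : DA E P = stf.hold := DA_eq (optimal_of_reach_terminal hreach hT₂)
      have hpers := fullAbove_reach hr₂ s i hfull hall
      have hinvf : Inv E P stf := hinvP.reach hr₂
      rcases hblock with h | ⟨j, hj, hij⟩
      · rw [hDA] at h
        have := hinvf.g2 s
        have := hpers.1
        omega
      · rw [hDA] at hj
        have := hpers.2 j (mem_assigned.2 hj)
        simp only [Prio.higher] at this hij
        omega
    · -- case (b): i enters s, displacing the worst held student; run phase 2
      push_neg at hall
      obtain ⟨y₀, hy₀, hy₀i⟩ := hall
      obtain ⟨w, hwmem, hwmax⟩ := Finset.exists_max_image (assigned st₁.hold s)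
        (E.prank s) ⟨y₀, hy₀⟩
      have hwmax' : ∀ z ∈ assigned st₁.hold s, z ≠ w → E.higher s z w := by
        intro z hz hzw
        exact lt_of_le_of_ne (hwmax z hz) fun he => hzw (E.inj s he)
      have hiw : E.higher s i w := by
        have hne2 : i ≠ y₀ := by
          intro he; rw [← he] at hy₀
          exact not_assigned_of_hold_none huntouched.1 hy₀
        have hiy : E.higher s i y₀ := by
          rcases higher_total (E := E) (c := s) hne2 with h | h
          · exact h
          · exact absurd h hy₀i
        exact lt_of_lt_of_le hiy (hwmax y₀ hy₀)
      have hwhold : st₁.hold w = some s := mem_assigned.1 hwmem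
      have hwi : w ≠ i := by
        intro he; rw [he, huntouched.1] at hwhold; cases hwhold
      have hstep := StepOn.displace (D := fun _ => True) st₁ i w s trivial
        huntouched.1 hpi hfull hwhold hwmax' hiw
      set st₂ : DAState I S := ⟨Function.update (Function.update st₁.hold w none) i
        (some s), Function.update st₁.rej w (insert s (st₁.rej w))⟩ with hst₂
      have htok2 : TokOnly Phat st₂ w := by
        refine ⟨?_, ?_⟩
        · rw [hst₂]; dsimp only
          rw [Function.update_of_ne hwi, Function.update_self]
        · intro y hyw hy
          rw [hst₂] at hy ⊢
          dsimp only at hy ⊢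
          by_cases hyi : y = i
          · subst hyi
            rw [Function.update_self] at hy; cases hy
          · rw [Function.update_of_ne hyi, Function.update_of_ne hyw] at hy
            rw [Function.update_of_ne hyw]
            exact hT₁ y hyi hy
      have hi2 : st₂.hold i = some s := by
        rw [hst₂]; dsimp only
        rw [Function.update_self]
      have hs2 : s ∈ st₂.rej w := by
        rw [hst₂]; dsimp only
        rw [Function.update_self]
        exact Finset.mem_insert_self _ _
      obtain ⟨st', hr', hT', hi'⟩ := P2run t r hacyc Phat i s hts htier (meas st₂)
        st₂ w le_rfl (hinv₁.step hstep) htok2 hi2 hwi (Or.inr ⟨hiw, hs2⟩)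
      have hreach : Relation.ReflTransGen (StepOn E Phat (fun _ => True))
          (initState (I := I) (S := S)) st' :=
        Relation.ReflTransGen.trans
          (Relation.ReflTransGen.tail (reach_mono (fun x _ => trivial) hr₁) hstep) hr'
      rw [DA_eq (optimal_of_reach_terminal hreach hT'), hi']

end LemmaHMain
section DirectionForward

variable {I S : Type} [Fintype I] [Fintype S] [DecidableEq I] [DecidableEq S]
variable {E : Prio I S} {t : S → ℕ} {R : I → Pref S}

lemma DA_none_of_nothing {P : I → Pref S} {j : I}
    (h : ∀ c : S, (P j).rank none < (P j).rank (some c)) : DA E P j = none := by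
  cases hD : DA E P j with
  | none => rfl
  | some c =>
    have hIR := (DA_stable E P).2.1 j
    rw [hD] at hIR
    have := h c
    omega

lemma TDA_update_nothing (Q : I → Pref S) (i : I) :
    ∀ k, TDAaux E t (Function.update Q i (onlyPref none)) k i = none := by
  intro k
  induction k with
  | zero => rfl
  | succ n ih =>
    rw [TDAaux_succ_of_none ih]
    apply DA_none_of_nothing
    intro c
    simp only [roundP]
    by_cases hi : TDAaux E t (Function.update Q i (onlyPref none)) n i = none
    · rw [if_pos hi, Function.update_self]
      apply not_acc_flip
      intro hacc
      obtain ⟨h1, h2⟩ := (trunc_acc_iff _ _).1 hacc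
      have h3 := onlyPref_acc_iff.1 h2
      cases h3
    · rw [if_neg hi]
      exact truncFalse_nothing _ c

lemma F1 (Q : I → Pref S) (i : I) (s : S) :
    ∀ k, k < t s → TDAaux E t (Function.update Q i (onlyPref (some s))) k i = none := by
  intro k
  induction k with
  | zero => intro _; rfl
  | succ n ih =>
    intro hk
    rw [TDAaux_succ_of_none (ih (by omega))]
    apply DA_none_of_nothing
    intro c
    simp only [roundP]
    rw [if_pos (ih (by omega)), Function.update_self]
    apply not_acc_flip
    intro hacc
    obtain ⟨h1, h2⟩ := (trunc_acc_iff _ _).1 hacc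
    have h3 := onlyPref_acc_iff.1 h2
    injection h3 with h3
    subst h3
    omega

lemma F2 (Q : I → Pref S) (i : I) (s : S) :
    ∀ k, k < t s → ∀ j, j ≠ i →
      TDAaux E t Q k j ≠ none →
      TDAaux E t (Function.update Q i (onlyPref (some s))) k j ≠ none := by
  intro k
  induction k with
  | zero => intro _ j _ h; exact absurd rfl h
  | succ n ih =>
    intro hk j hji hQj
    by_cases hstar : TDAaux E t (Function.update Q i (onlyPref (some s))) n j = none
    case neg =>
      intro hcon
      cases hq : TDAaux E t (Function.update Q i (onlyPref (some s))) n j with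
      | none => exact hstar hq
      | some c =>
        rw [TDAaux_succ_of_some hq] at hcon
        cases hcon
    case pos =>
      have hQn : TDAaux E t Q n j = none := by
        by_contra hne
        exact (ih (by omega) j hji hne) hstar
      obtain ⟨c, hc⟩ : ∃ c, DA E (roundP E t Q n) j = some c := by
        cases hq : TDAaux E t Q (n + 1) j with
        | none => exact absurd hq hQj
        | some c =>
          rw [TDAaux_succ_of_none hQn] at hq
          exact ⟨c, hq⟩
      have hagree : ∀ l, roundP E t Q n l = roundP E t
          (Function.update Q i (onlyPref (some s))) n l ∨
          ∀ d : S, (roundP E t (Function.update Q i (onlyPref (some s))) n l).rank none <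
            (roundP E t (Function.update Q i (onlyPref (some s))) n l).rank (some d) := by
        intro l
        by_cases hli : l = i
        · subst hli
          right
          intro d
          simp only [roundP]
          by_cases hl : TDAaux E t (Function.update Q l (onlyPref (some s))) n l = none
          · rw [if_pos hl, Function.update_self]
            apply not_acc_flip
            intro hacc
            obtain ⟨h1, h2⟩ := (trunc_acc_iff _ _).1 hacc
            have h3 := onlyPref_acc_iff.1 h2
            injection h3 with h3
            subst h3
            omega
          · rw [if_neg hl]
            exact truncFalse_nothing _ d
        · by_cases hl : TDAaux E t (Function.update Q i (onlyPref (some s))) n l = none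
          · left
            have hl2 : TDAaux E t Q n l = none := by
              by_contra hne
              exact (ih (by omega) l hli hne) hl
            simp only [roundP]
            rw [if_pos hl, if_pos hl2, Function.update_of_ne hli]
          · right
            intro d
            simp only [roundP]
            rw [if_neg hl]
            exact truncFalse_nothing _ d
      have hPj : roundP E t Q n j = roundP E t
          (Function.update Q i (onlyPref (some s))) n j := by
        simp only [roundP]
        rw [if_pos hQn, if_pos hstar, Function.update_of_ne hji]
      have hL := lemmaL (E := E) (DA_stable E (roundP E t Q n)) hagree j hPj
      intro hcon
      rw [TDAaux_succ_of_none hstar] at hcon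
      rw [hcon, hc] at hL
      have hIR := (DA_stable E (roundP E t Q n)).2.1 j
      rw [hc] at hIR
      have hlt : (roundP E t Q n j).rank (some c) < (roundP E t Q n j).rank none :=
        rank_lt_of_le_ne hIR (by simp)
      omega

end DirectionForward
/-- If `(q, ≿, t)` is within-tier acyclic, then for every profile of true
preferences the Nash equilibrium outcomes of the TDA mechanism are exactly the stable
matchings. -/
theorem withinTierAcyclic_TDA_implements_stable
    (E : Prio I S) (t : S → ℕ) (T : ℕ) (ht : IsTierStructure t T)
    (hacyc : WithinTierAcyclic E t)
    (R : I → Pref S) (μ : Matching I S) :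
    NashOutcome R (TDA E t) μ ↔ Stable E R μ := by
  constructor
  · rintro ⟨Q, hN, rfl⟩
    have ht1 : ∀ s, 1 ≤ t s := fun s => (ht.1 s).1
    refine ⟨?_, ?_, ?_⟩
    · -- feasibility
      intro c
      rw [assigned_TDA (E := E) (t := t) (Q := Q) ht1 c]
      exact (DA_stable E _).1 c
    · -- individual rationality
      intro i
      have hdev := hN i (onlyPref none)
      have hnone : TDA E t (Function.update Q i (onlyPref none)) i = none :=
        TDA_update_nothing Q i (Finset.univ.sup t)
      rw [hnone] at hdev
      exact hdev
    · -- no blocking pairs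
      rintro i s ⟨hpref, hdisj⟩
      have ht1s : 1 ≤ t s := ht1 s
      have hk : t s - 1 < t s := by omega
      have hF1 : TDAaux E t (Function.update Q i (onlyPref (some s))) (t s - 1) i =
          none := F1 Q i s (t s - 1) hk
      have hr1 : t s - 1 + 1 = t s := by omega
      have hPhati : roundP E t (Function.update Q i (onlyPref (some s))) (t s - 1) i =
          trunc (fun c => t c = (t s - 1) + 1) (onlyPref (some s)) := by
        simp only [roundP]
        rw [if_pos hF1, Function.update_self]
      have htop : ∀ o, o ≠ some s →
          (roundP E t (Function.update Q i (onlyPref (some s))) (t s - 1) i).rank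
            (some s) <
          (roundP E t (Function.update Q i (onlyPref (some s))) (t s - 1) i).rank o := by
        intro o ho
        rw [hPhati]
        have h0 : (trunc (fun c => t c = (t s - 1) + 1) (onlyPref (some s))).rank
            (some s) = 0 := by
          rw [trunc_rank_some_mem (fun c => t c = (t s - 1) + 1) (onlyPref (some s))
            (by omega)]
          exact onlyPref_rank_self (some s)
        rw [h0]
        cases o with
        | none =>
          rw [trunc_rank_none]
          exact onlyPref_rank_pos (by simp)
        | some c =>
          have hcs : some c ≠ (some s : Option S) := fun he => ho (by rw [he])
          by_cases htc : t c = (t s - 1) + 1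
          · rw [trunc_rank_some_mem (fun c => t c = (t s - 1) + 1) (onlyPref (some s))
              htc]
            exact onlyPref_rank_pos hcs
          · rw [trunc_rank_some_not (fun c => t c = (t s - 1) + 1) (onlyPref (some s))
              htc]
            have : 1 ≤ bnd (onlyPref (some s) : Pref S) := by
              rw [bnd]; omega
            omega
      have htier : ∀ (j : I) (c : S),
          ((roundP E t (Function.update Q i (onlyPref (some s))) (t s - 1)) j).rank
            (some c) <
          ((roundP E t (Function.update Q i (onlyPref (some s))) (t s - 1)) j).rank
            none → t c = t s := by
        intro j c hacc
        have := (roundP_acc (E := E) (t := t)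
          (Q := Function.update Q i (onlyPref (some s))) hacc).2.1
        omega
      have hagree : ∀ j, j ≠ i →
          roundP E t Q (t s - 1) j =
            roundP E t (Function.update Q i (onlyPref (some s))) (t s - 1) j ∨
          ∀ c : S,
            ((roundP E t (Function.update Q i (onlyPref (some s))) (t s - 1)) j).rank
              none <
            ((roundP E t (Function.update Q i (onlyPref (some s))) (t s - 1)) j).rank
              (some c) := by
        intro j hji
        by_cases hj : TDAaux E t (Function.update Q i (onlyPref (some s)))
            (t s - 1) j = none
        · left
          have hj2 : TDAaux E t Q (t s - 1) j = none := by
            by_contra hne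
            exact F2 Q i s (t s - 1) hk j hji hne hj
          simp only [roundP]
          rw [if_pos hj, if_pos hj2, Function.update_of_ne hji]
        · right
          intro c
          simp only [roundP]
          rw [if_neg hj]
          exact truncFalse_nothing _ c
      have hblock : (assigned (DA E (roundP E t Q (t s - 1))) s).card < E.quota s ∨
          ∃ j, DA E (roundP E t Q (t s - 1)) j = some s ∧ E.higher s i j := by
        have hB3 := assigned_TDA (E := E) (t := t) (Q := Q) ht1 s
        rcases hdisj with h | ⟨j, hj, hij⟩
        · left
          rw [← hB3]
          exact h
        · right
          refine ⟨j, ?_, hij⟩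
          have : j ∈ assigned (TDA E t Q) s := mem_assigned.2 hj
          rw [hB3] at this
          exact mem_assigned.1 this
      have hH := lemmaH t (t s) (hacyc (t s)) (roundP E t Q (t s - 1))
        (roundP E t (Function.update Q i (onlyPref (some s))) (t s - 1)) i s rfl
        htop htier hagree hblock
      have hTDA' : TDA E t (Function.update Q i (onlyPref (some s))) i = some s := by
        have h2 : TDAaux E t (Function.update Q i (onlyPref (some s)))
            ((t s - 1) + 1) i = some s := by
          rw [TDAaux_succ_of_none hF1]
          exact hH
        rw [hr1] at h2
        exact TDAaux_mono h2 (Finset.le_sup (Finset.mem_univ s))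
      have hdev := hN i (onlyPref (some s))
      rw [hTDA'] at hdev
      omega
  · intro hμ
    exact stable_to_nashOutcome ht hμ

end SchoolChoice
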